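/- arXiv:1510.06390 — 5 statements merged into one kernel-verified Lean document; each statement's English description precedes it below -/
import Mathlib

section
/- Stability estimate: Let w_1,…,w_n be real numbers and z in the upper half plane such that m_fc(z) exists with Im m_fc(z) ≥ c_* > 0 and |m_fc(z)| ≤ 1, and suppose (1/n) ∑_k 1/(w_k − z − m_fc(z)) = m_fc(z) + ε(z) with |ε(z)| ≤ min{c_*³/16, c_*/2}. Then c_*²/16 ≤ |1 − (1/n) ∑_k 1/(w_k − z − m_fc(z))²| ≤ 1 + 1/c_*². -/
private lemma stability_key (c u v A : ℝ) (hc : 0 < c) (him : c ≤ u) (hmv : u ≤ v)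
    (hA : 0 ≤ A) (h1 : v * A ≤ u + c ^ 3 / 16) (h2 : u - c / 2 ≤ v * A) :
    c ^ 2 / 16 ≤ 1 - A + 2 * (v * A) ^ 2 := by
  have hu : 0 < u := lt_of_lt_of_le hc him
  have hs : c / 2 ≤ v * A := by linarith
  have h3 : u * A ≤ v * A := mul_le_mul_of_nonneg_right hmv hA
  have h6 : 0 ≤ u * (1 + c ^ 2 / 16 - A) := by
    nlinarith [mul_nonneg (sub_nonneg.2 him) (sq_nonneg c)]
  have hAle : A ≤ 1 + c ^ 2 / 16 := by nlinarith
  have h7 : c ^ 2 / 4 ≤ (v * A) ^ 2 := by nlinarith [mul_self_le_mul_self (by positivity : (0:ℝ) ≤ c/2) hs]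
  linarith [sq_nonneg c]

/-- Stability estimate: if `m` is a complex number with `Im m ≥ c_* > 0` and `|m| ≤ 1`,
`w_1, …, w_n` are reals, `Im z > 0`, and `(1/n) ∑_k 1/(w_k - z - m) = m + ε` with
`|ε| ≤ min (c_*³/16) (c_*/2)`, then
`c_*²/16 ≤ |1 - (1/n) ∑_k 1/(w_k - z - m)²| ≤ 1 + 1/c_*²`. -/
theorem stability_estimate (n : ℕ) (hn : 0 < n) (w : Fin n → ℝ) (z m : ℂ) (cstar : ℝ)
    (hz : 0 < z.im) (hc : 0 < cstar) (him : cstar ≤ m.im) (habs : ‖m‖ ≤ 1)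
    (heps : ‖(1 / (n : ℂ)) * ∑ k : Fin n, ((w k : ℂ) - z - m)⁻¹ - m‖
      ≤ min (cstar ^ 3 / 16) (cstar / 2)) :
    cstar ^ 2 / 16
        ≤ ‖1 - (1 / (n : ℂ)) * ∑ k : Fin n, (((w k : ℂ) - z - m) ^ 2)⁻¹‖ ∧
      ‖1 - (1 / (n : ℂ)) * ∑ k : Fin n, (((w k : ℂ) - z - m) ^ 2)⁻¹‖
        ≤ 1 + 1 / cstar ^ 2 := by
  set d : Fin n → ℂ := fun k => (w k : ℂ) - z - m with hd
  set v : ℝ := z.im + m.im with hv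
  have hmim : 0 < m.im := lt_of_lt_of_le hc him
  have hvpos : 0 < v := by rw [hv]; linarith
  have hvc : cstar ≤ v := by rw [hv]; linarith
  have him_d : ∀ k, (d k).im = -v := by
    intro k; simp [hd, hv, Complex.sub_im]; ring
  have hN : ∀ k, v ^ 2 ≤ Complex.normSq (d k) := by
    intro k
    rw [Complex.normSq_apply, him_d k]
    nlinarith [sq_nonneg (d k).re]
  have hNpos : ∀ k, 0 < Complex.normSq (d k) := fun k => lt_of_lt_of_le (by positivity) (hN k)
  have hnR : (0:ℝ) < (n:ℝ) := by exact_mod_cast hn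
  set A : ℝ := (1 / (n:ℝ)) * ∑ k : Fin n, (Complex.normSq (d k))⁻¹ with hA
  set B : ℝ := (1 / (n:ℝ)) * ∑ k : Fin n, ((Complex.normSq (d k))⁻¹) ^ 2 with hB
  have hAnn : 0 ≤ A := by
    apply mul_nonneg (one_div_nonneg.mpr hnR.le)
    exact Finset.sum_nonneg fun k _ => inv_nonneg.mpr (Complex.normSq_nonneg _)
  -- imaginary part identity
  have himS : ((1 / (n:ℂ)) * ∑ k : Fin n, (d k)⁻¹).im = v * A := by
    rw [Complex.mul_im]
    have h1 : (1 / (n:ℂ)).im = 0 := by simp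
    have h2 : (1 / (n:ℂ)).re = 1 / (n:ℝ) := by simp
    rw [h1, h2, Complex.im_sum]
    have : ∀ k : Fin n, ((d k)⁻¹).im = v * (Complex.normSq (d k))⁻¹ := by
      intro k
      rw [Complex.inv_im, him_d k]
      field_simp
    simp only [this, ← Finset.mul_sum, hA]
    ring
  -- bound on v*A - m.im
  have himeps : |v * A - m.im| ≤ min (cstar ^ 3 / 16) (cstar / 2) := by
    have := (Complex.abs_im_le_norm ((1 / (n : ℂ)) * ∑ k : Fin n, (d k)⁻¹ - m)).trans heps
    rwa [Complex.sub_im, himS] at this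
  have hvA1 : v * A ≤ m.im + cstar ^ 3 / 16 := by
    have h1 := (abs_le.1 himeps).2
    have h2 := min_le_left (cstar ^ 3 / 16) (cstar / 2)
    linarith
  have hvA2 : m.im - cstar / 2 ≤ v * A := by
    have h1 := (abs_le.1 himeps).1
    have h2 := min_le_right (cstar ^ 3 / 16) (cstar / 2)
    linarith
  -- Cauchy-Schwarz : A^2 ≤ B
  have hCS : A ^ 2 ≤ B := by
    have hcs := sq_sum_le_card_mul_sum_sq (s := (Finset.univ : Finset (Fin n)))
      (f := fun k => (Complex.normSq (d k))⁻¹)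
    simp only [Finset.card_univ, Fintype.card_fin] at hcs
    have hcs' : (∑ k : Fin n, (Complex.normSq (d k))⁻¹) ^ 2
        ≤ (n:ℝ) * ∑ k : Fin n, ((Complex.normSq (d k))⁻¹) ^ 2 := by exact_mod_cast hcs
    calc A ^ 2 = (1/(n:ℝ))^2 * (∑ k : Fin n, (Complex.normSq (d k))⁻¹) ^ 2 := by
            rw [hA]; ring
      _ ≤ (1/(n:ℝ))^2 * ((n:ℝ) * ∑ k : Fin n, ((Complex.normSq (d k))⁻¹) ^ 2) := by
            exact mul_le_mul_of_nonneg_left hcs' (by positivity)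
      _ = B := by rw [hB]; field_simp
  -- real part identity
  have hreS : (1 - (1 / (n:ℂ)) * ∑ k : Fin n, ((d k) ^ 2)⁻¹).re = 1 - A + 2 * v ^ 2 * B := by
    rw [Complex.sub_re, Complex.one_re, Complex.mul_re]
    have h1 : (1 / (n:ℂ)).im = 0 := by simp
    have h2 : (1 / (n:ℂ)).re = 1 / (n:ℝ) := by simp
    rw [h1, h2, Complex.re_sum]
    have hterm : ∀ k : Fin n, (((d k) ^ 2)⁻¹).re
        = (Complex.normSq (d k))⁻¹ - 2 * v ^ 2 * ((Complex.normSq (d k))⁻¹) ^ 2 := by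
      intro k
      have hre : ((d k) ^ 2).re = (d k).re ^ 2 - v ^ 2 := by
        rw [sq, Complex.mul_re, him_d k]; ring
      have hNk : Complex.normSq (d k) = (d k).re ^ 2 + v ^ 2 := by
        rw [Complex.normSq_apply, him_d k]; ring
      have h0 : (d k).re ^ 2 + v ^ 2 ≠ 0 := by rw [← hNk]; exact (hNpos k).ne'
      rw [Complex.inv_re, map_pow, hre, hNk]
      field_simp
      ring
    simp only [hterm]
    rw [Finset.sum_sub_distrib, ← Finset.mul_sum]
    rw [hA, hB]
    ring
  -- abs of each term
  have habsterm : ∀ k : Fin n, ‖((d k) ^ 2)⁻¹‖ ≤ 1 / cstar ^ 2 := by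
    intro k
    rw [norm_inv, norm_pow, one_div]
    apply inv_anti₀ (by positivity)
    have h2 := hN k
    rw [← Complex.sq_norm] at h2
    nlinarith
  have hmv : m.im ≤ v := by rw [hv]; linarith
  have hdk : ∀ k : Fin n, ((w k : ℂ) - z - m) = d k := fun k => rfl
  simp only [hdk]
  clear hd hv hA hB hdk
  clear_value d v A B
  constructor
  · -- lower bound
    have h1 : cstar ^ 2 / 16 ≤ (1 - (1 / (n:ℂ)) * ∑ k : Fin n, ((d k) ^ 2)⁻¹).re := by
      rw [hreS]
      have hb : 2 * v ^ 2 * A ^ 2 ≤ 2 * v ^ 2 * B :=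
        mul_le_mul_of_nonneg_left hCS (by positivity)
      have key : cstar ^ 2 / 16 ≤ 1 - A + 2 * (v * A) ^ 2 :=
        stability_key cstar m.im v A hc him hmv hAnn hvA1 hvA2
      nlinarith [key, hb]
    calc cstar ^ 2 / 16 ≤ (1 - (1 / (n:ℂ)) * ∑ k : Fin n, ((d k) ^ 2)⁻¹).re := h1
      _ ≤ |(1 - (1 / (n:ℂ)) * ∑ k : Fin n, ((d k) ^ 2)⁻¹).re| := le_abs_self _
      _ ≤ ‖1 - (1 / (n:ℂ)) * ∑ k : Fin n, ((d k) ^ 2)⁻¹‖ := Complex.abs_re_le_norm _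
  · -- upper bound
    calc ‖1 - (1 / (n:ℂ)) * ∑ k : Fin n, ((d k) ^ 2)⁻¹‖
        ≤ ‖(1:ℂ)‖ + ‖(1 / (n:ℂ)) * ∑ k : Fin n, ((d k) ^ 2)⁻¹‖ := by
          exact
            norm_sub_le (1:ℂ) ((1 / (n:ℂ)) * ∑ k : Fin n, ((d k) ^ 2)⁻¹)
      _ ≤ 1 + 1 / cstar ^ 2 := by
          rw [norm_one]
          gcongr
          rw [norm_mul]
          have h1 : ‖1 / (n:ℂ)‖ = 1 / (n:ℝ) := by
            simp [map_div₀]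
          rw [h1]
          calc 1 / (n:ℝ) * ‖∑ k : Fin n, ((d k) ^ 2)⁻¹‖
              ≤ 1 / (n:ℝ) * ∑ k : Fin n, ‖((d k) ^ 2)⁻¹‖ := by
                gcongr
                exact (norm_sum_le _ _)
            _ ≤ 1 / (n:ℝ) * ∑ k : Fin n, (1 / cstar ^ 2) := by
                gcongr with k
                exact habsterm k
            _ = 1 / cstar ^ 2 := by
                rw [Finset.sum_const, Finset.card_univ, Fintype.card_fin, nsmul_eq_mul]
                field_simp
end

section
/- Gaussian tail bound for ρ_fc: Let m_fc be the Stieltjes transform of the free convolution ρ_fc of the semicircle and standard Gaussian laws, satisfying |m_fc(z)| ≤ 1, and let ρ_fc(E) = lim_{η↓0} π^{-1} Im m_fc(E+iη). Then √(2π) = ∫_ℝ e^{-x²/2} dx / ((x − E − Re m_fc(E))² + π² ρ_fc(E)²) and consequently, for |E| sufficiently large, ρ_fc(E) ≤ e^{-E²/8}. -/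
open MeasureTheory

open Real Filter

lemma gauss_integrable' : Integrable (fun x : ℝ => Real.exp (-x ^ 2 / 2)) := by
  have h := integrable_exp_neg_mul_sq (by norm_num : (0:ℝ) < 1/2)
  refine h.congr (Filter.Eventually.of_forall fun x => ?_)
  ring_nf

lemma gauss_integral' : ∫ x : ℝ, Real.exp (-x ^ 2 / 2) = Real.sqrt (2 * Real.pi) := by
  have h := integral_gaussian (1/2)
  rw [show Real.pi / (1/2) = 2 * Real.pi by ring] at h
  rw [← h]
  congr 1; funext x; ring_nf

lemma lorentz_eq (p c : ℝ) (hc : c ≠ 0) :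
    ∀ x : ℝ, ((x - p)^2 + c^2)⁻¹ = (c^2)⁻¹ * (1 + ((x - p)/c)^2)⁻¹ := by
  intro x
  rw [← mul_inv]
  congr 1
  field_simp
  ring

lemma lorentz_integrable (p c : ℝ) (hc : c ≠ 0) :
    Integrable (fun x : ℝ => ((x - p)^2 + c^2)⁻¹) := by
  have h1 : Integrable (fun x : ℝ => (1 + (x / c)^2)⁻¹) := integrable_inv_one_add_sq.comp_div hc
  have h3 : Integrable (fun x : ℝ => (1 + ((x - p) / c)^2)⁻¹) := h1.comp_sub_right p
  have h4 := h3.const_mul (c^2)⁻¹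
  exact h4.congr (Filter.Eventually.of_forall fun x => ((lorentz_eq p c hc) x).symm)

lemma lorentz_integral (p : ℝ) {c : ℝ} (hc : 0 < c) :
    ∫ x : ℝ, ((x - p)^2 + c^2)⁻¹ = Real.pi / c := by
  simp_rw [lorentz_eq p c hc.ne']
  rw [integral_const_mul]
  rw [integral_sub_right_eq_self (fun x : ℝ => (1 + (x/c)^2)⁻¹) p]
  rw [MeasureTheory.Measure.integral_comp_div (fun y : ℝ => (1 + y^2)⁻¹) c, integral_univ_inv_one_add_sq]
  rw [abs_of_pos hc, smul_eq_mul]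
  field_simp

set_option maxHeartbeats 2000000 in
theorem aux_key (mfc : ℂ → ℂ) (ρfc : ℝ → ℝ)
    (hfix : ∀ z : ℂ, 0 < z.im →
      mfc z = ∫ x : ℝ,
        (((Real.sqrt (2 * Real.pi))⁻¹ * Real.exp (-x ^ 2 / 2) : ℝ) : ℂ) / ((x : ℂ) - z - mfc z))
    (him : ∀ z : ℂ, 0 < z.im → 0 ≤ (mfc z).im)
    (habs : ∀ z : ℂ, 0 < z.im → ‖mfc z‖ ≤ 1)
    (hcont : ∀ E : ℝ, Filter.Tendsto (fun η : ℝ => mfc ((E : ℂ) + η * Complex.I))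
      (nhdsWithin 0 (Set.Ioi 0)) (nhds (mfc (E : ℂ))))
    (hρ : ∀ E : ℝ, Filter.Tendsto
      (fun η : ℝ => Real.pi⁻¹ * (mfc ((E : ℂ) + η * Complex.I)).im)
      (nhdsWithin 0 (Set.Ioi 0)) (nhds (ρfc E))) (E : ℝ) :
    0 < ρfc E ∧ ‖mfc (E : ℂ)‖ ≤ 1 ∧
    Real.sqrt (2 * Real.pi)
        = ∫ x : ℝ, Real.exp (-x ^ 2 / 2)
            / ((x - E - (mfc (E : ℂ)).re) ^ 2 + Real.pi ^ 2 * ρfc E ^ 2) := by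
  set l := nhdsWithin (0:ℝ) (Set.Ioi 0) with hl
  set g : ℝ → ℝ := fun x => (Real.sqrt (2 * Real.pi))⁻¹ * Real.exp (-x ^ 2 / 2) with hgdef
  have hsq : 0 < Real.sqrt (2 * Real.pi) := Real.sqrt_pos.2 (by positivity)
  have hg_pos : ∀ x, 0 < g x := fun x => by
    rw [hgdef]; positivity
  have hg_cont : Continuous g := by
    rw [hgdef]; fun_prop
  have hg_int : Integrable g := gauss_integrable'.const_mul _
  have hz_im : ∀ η : ℝ, ((E:ℂ) + η * Complex.I).im = η := by
    intro η; simp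
  -- abbreviations
  set a : ℝ → ℝ := fun η => (mfc ((E:ℂ) + η * Complex.I)).re with hadef
  set b : ℝ → ℝ := fun η => (mfc ((E:ℂ) + η * Complex.I)).im with hbdef
  have hD : ∀ η x : ℝ, Complex.normSq ((x:ℂ) - ((E:ℂ) + η * Complex.I) - mfc ((E:ℂ) + η * Complex.I))
      = (x - E - a η)^2 + (η + b η)^2 := by
    intro η x
    rw [Complex.normSq_apply]
    simp only [Complex.sub_re, Complex.sub_im, Complex.add_re, Complex.add_im, Complex.mul_re,
      Complex.mul_im, Complex.I_re, Complex.I_im, Complex.ofReal_re, Complex.ofReal_im,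
      hadef, hbdef]
    ring
  -- the key equation for η > 0
  have key1 : ∀ η : ℝ, 0 < η →
      b η = (η + b η) * ∫ x : ℝ, g x / ((x - E - a η)^2 + (η + b η)^2) := by
    intro η hη
    have hzim : (0:ℝ) < ((E:ℂ) + η * Complex.I).im := by rw [hz_im]; exact hη
    have hb0 : 0 ≤ b η := him _ hzim
    have hs : 0 < η + b η := by linarith
    have hwim : ∀ x : ℝ, ((x:ℂ) - ((E:ℂ) + η * Complex.I) - mfc ((E:ℂ) + η * Complex.I)).im
        = -(η + b η) := by
      intro x
      simp only [Complex.sub_im, Complex.add_im, Complex.mul_im, Complex.I_re, Complex.I_im,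
        Complex.ofReal_re, Complex.ofReal_im, hbdef]
      ring
    have hw_abs : ∀ x : ℝ, η + b η ≤ ‖(x:ℂ) - ((E:ℂ) + η * Complex.I) - mfc ((E:ℂ) + η * Complex.I)‖ := by
      intro x
      have h1 := Complex.abs_im_le_norm ((x:ℂ) - ((E:ℂ) + η * Complex.I) - mfc ((E:ℂ) + η * Complex.I))
      rw [hwim x, abs_neg, abs_of_pos hs] at h1
      exact h1
    have hw_ne : ∀ x : ℝ, ((x:ℂ) - ((E:ℂ) + η * Complex.I) - mfc ((E:ℂ) + η * Complex.I)) ≠ 0 := by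
      intro x h
      have := hwim x
      rw [h] at this
      simp at this
      linarith
    have hF_cont : Continuous fun x : ℝ => ((g x : ℝ) : ℂ) / ((x:ℂ) - ((E:ℂ) + η * Complex.I) - mfc ((E:ℂ) + η * Complex.I)) := by
      apply Continuous.div
      · exact Complex.continuous_ofReal.comp hg_cont
      · fun_prop
      · exact hw_ne
    have hF_int : Integrable fun x : ℝ => ((g x : ℝ) : ℂ) / ((x:ℂ) - ((E:ℂ) + η * Complex.I) - mfc ((E:ℂ) + η * Complex.I)) := by
      apply Integrable.mono' (hg_int.mul_const (η + b η)⁻¹) hF_cont.aestronglyMeasurable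
      filter_upwards with x
      rw [norm_div, Complex.norm_real, Real.norm_eq_abs, abs_of_pos (hg_pos x)]
      rw [div_le_iff₀ (lt_of_lt_of_le hs (by exact hw_abs x))]
      calc g x = g x * (η + b η)⁻¹ * (η + b η) := by field_simp
        _ ≤ g x * (η + b η)⁻¹ * ‖(x:ℂ) - ((E:ℂ) + η * Complex.I) - mfc ((E:ℂ) + η * Complex.I)‖ := by
            apply mul_le_mul_of_nonneg_left _ (by positivity)
            exact hw_abs x
    have him_eq := hfix _ hzim
    have hgx : ∀ x : ℝ, (Real.sqrt (2 * Real.pi))⁻¹ * Real.exp (-x ^ 2 / 2) = g x := fun x => rfl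
    simp only [hgx] at him_eq
    have h3 := Complex.imCLM.integral_comp_comm hF_int
    simp only [Complex.imCLM_apply] at h3
    have h4 : ∀ x : ℝ, (((g x : ℝ) : ℂ) / ((x:ℂ) - ((E:ℂ) + η * Complex.I) - mfc ((E:ℂ) + η * Complex.I))).im
        = (η + b η) * (g x / ((x - E - a η)^2 + (η + b η)^2)) := by
      intro x
      rw [Complex.div_im, hD η x, hwim x]
      have hDpos : (0:ℝ) < (x - E - a η)^2 + (η + b η)^2 := by positivity
      simp only [Complex.ofReal_im, Complex.ofReal_re]
      field_simp
      ring
    calc b η = (∫ x : ℝ, ((g x : ℝ) : ℂ) / ((x:ℂ) - ((E:ℂ) + η * Complex.I) - mfc ((E:ℂ) + η * Complex.I))).im := by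
          rw [← him_eq]
      _ = ∫ x : ℝ, (((g x : ℝ) : ℂ) / ((x:ℂ) - ((E:ℂ) + η * Complex.I) - mfc ((E:ℂ) + η * Complex.I))).im := h3.symm
      _ = ∫ x : ℝ, (η + b η) * (g x / ((x - E - a η)^2 + (η + b η)^2)) :=
          integral_congr_ae (Filter.Eventually.of_forall h4)
      _ = (η + b η) * ∫ x : ℝ, g x / ((x - E - a η)^2 + (η + b η)^2) := integral_const_mul _ _
  -- integrability of the real integrand
  have hI_int : ∀ η : ℝ, 0 < η →
      Integrable (fun x : ℝ => g x / ((x - E - a η)^2 + (η + b η)^2)) := by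
    intro η hη
    have hzim : (0:ℝ) < ((E:ℂ) + η * Complex.I).im := by rw [hz_im]; exact hη
    have hb0 : 0 ≤ b η := him _ hzim
    have hs : 0 < η + b η := by linarith
    apply Integrable.mono' (hg_int.mul_const ((η + b η)^2)⁻¹)
    · apply Continuous.aestronglyMeasurable
      apply hg_cont.div
      · fun_prop
      · intro x; positivity
    · filter_upwards with x
      rw [Real.norm_eq_abs, abs_of_nonneg (by positivity), ← div_eq_mul_inv]
      exact div_le_div_of_nonneg_left (hg_pos x).le (by positivity) (by nlinarith [sq_nonneg (x - E - a η)])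
  have hI_eq : ∀ η : ℝ, 0 < η →
      (∫ x : ℝ, g x / ((x - E - a η)^2 + (η + b η)^2)) = b η / (η + b η) := by
    intro η hη
    have hzim : (0:ℝ) < ((E:ℂ) + η * Complex.I).im := by rw [hz_im]; exact hη
    have hb0 : 0 ≤ b η := him _ hzim
    have hs : 0 < η + b η := by linarith
    rw [eq_div_iff hs.ne', mul_comm]
    exact (key1 η hη).symm
  -- limits
  set a0 : ℝ := (mfc (E:ℂ)).re with ha0def
  set b0 : ℝ := (mfc (E:ℂ)).im with hb0def
  have hb_t : Filter.Tendsto b l (nhds b0) :=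
    (Complex.continuous_im.tendsto _).comp (hcont E)
  have ha_t : Filter.Tendsto a l (nhds a0) :=
    (Complex.continuous_re.tendsto _).comp (hcont E)
  have hmem : ∀ᶠ η in l, η ∈ Set.Ioi (0:ℝ) := self_mem_nhdsWithin
  have hρE : ρfc E = Real.pi⁻¹ * b0 :=
    tendsto_nhds_unique (hρ E) (tendsto_const_nhds.mul hb_t)
  have hb0_nonneg : 0 ≤ b0 := by
    apply ge_of_tendsto hb_t
    filter_upwards [hmem] with η hη
    exact him _ (by rw [hz_im]; exact hη)
  have hid_t : Filter.Tendsto (fun η : ℝ => η) l (nhds 0) :=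
    Filter.tendsto_id'.mpr nhdsWithin_le_nhds
  have hs_t : Filter.Tendsto (fun η : ℝ => η + b η) l (nhds b0) := by
    have := hid_t.add hb_t
    rwa [zero_add] at this
  -- positivity of b0
  have hb0_pos : 0 < b0 := by
    rcases hb0_nonneg.lt_or_eq with h | h
    · exact h
    exfalso
    have hb00 : b0 = 0 := h.symm
    set p : ℝ := E + a0 with hpdef
    set c0 : ℝ := (Real.sqrt (2 * Real.pi))⁻¹ * Real.exp (-(|p| + 1) ^ 2 / 2) with hc0def
    have hc0_pos : 0 < c0 := by rw [hc0def]; positivity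
    have hglb : ∀ x : ℝ, x ∈ Set.Icc (p - 1) (p + 1) → c0 ≤ g x := by
      intro x hx
      rw [hc0def, hgdef]
      simp only
      apply mul_le_mul_of_nonneg_left _ (by positivity)
      apply Real.exp_le_exp.2
      have hxabs : |x| ≤ |p| + 1 := by
        rcases hx with ⟨h1, h2⟩
        rw [abs_le]; constructor <;> [skip; skip] <;> cases abs_cases p <;> linarith
      have : x ^ 2 ≤ (|p| + 1) ^ 2 := by
        rw [← sq_abs x]
        apply pow_le_pow_left₀ (abs_nonneg x) hxabs
      linarith
    set ε : ℝ := min (c0 / 4) (4⁻¹) with hεdef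
    have hε_pos : 0 < ε := by apply lt_min (by positivity) (by norm_num)
    have hev : ∀ᶠ η in l, (0 < η ∧ η < ε) ∧ b η < ε ∧ |a η - a0| < 1/2 := by
      have e1 : ∀ᶠ η in l, 0 < η := hmem
      have e2 : ∀ᶠ η in l, η < ε := hid_t.eventually (eventually_lt_nhds hε_pos)
      have e3 : ∀ᶠ η in l, b η < ε := by
        rw [hb00] at hb_t
        exact hb_t.eventually (eventually_lt_nhds hε_pos)
      have e4 : ∀ᶠ η in l, |a η - a0| < 1/2 := by
        have := Metric.tendsto_nhds.mp ha_t (1/2) (by norm_num)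
        simpa [Real.dist_eq] using this
      filter_upwards [e1, e2, e3, e4] with η h1 h2 h3 h4
      exact ⟨⟨h1, h2⟩, h3, h4⟩
    obtain ⟨η, ⟨hη, hηε⟩, hbε, haclose⟩ := hev.exists
    have hzim : (0:ℝ) < ((E:ℂ) + η * Complex.I).im := by rw [hz_im]; exact hη
    have hbnn : 0 ≤ b η := him _ hzim
    set s : ℝ := η + b η with hsdef
    have hs_pos : 0 < s := by rw [hsdef]; linarith
    have hs_lt : s < 2 * ε := by rw [hsdef]; linarith
    have hs_half : s < 1/2 := by
      have : ε ≤ 4⁻¹ := min_le_right _ _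
      linarith
    have hs_c0 : s < c0 / 2 := by
      have : ε ≤ c0 / 4 := min_le_left _ _
      linarith
    set q : ℝ := E + a η with hqdef
    have hsub : Set.Icc (q - s) (q + s) ⊆ Set.Icc (p - 1) (p + 1) := by
      intro x hx
      rcases hx with ⟨h1, h2⟩
      obtain ⟨h3, h4⟩ := abs_lt.mp haclose
      have hq1 : q = E + a η := hqdef
      have hp1 : p = E + a0 := hpdef
      constructor <;> linarith
    -- lower bound on the integral over the small interval
    have hK : MeasurableSet (Set.Icc (q - s) (q + s)) := measurableSet_Icc
    have hlow : ∀ x ∈ Set.Icc (q - s) (q + s),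
        c0 / (2 * s^2) ≤ g x / ((x - E - a η)^2 + (η + b η)^2) := by
      intro x hx
      have hg : c0 ≤ g x := hglb x (hsub hx)
      have hDle : (x - E - a η)^2 + (η + b η)^2 ≤ 2 * s^2 := by
        rcases hx with ⟨h1, h2⟩
        have hxq : (x - q)^2 ≤ s^2 := by nlinarith [hqdef]
        have : x - E - a η = x - q := by rw [hqdef]; ring
        rw [this, ← hsdef]
        nlinarith
      have hDpos : 0 < (x - E - a η)^2 + (η + b η)^2 := by
        have : 0 < (η + b η) := by linarith
        positivity
      exact div_le_div₀ (hg_pos x).le hg hDpos hDle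
    have hIntOn : IntegrableOn (fun x : ℝ => g x / ((x - E - a η)^2 + (η + b η)^2))
        (Set.Icc (q - s) (q + s)) := (hI_int η hη).integrableOn
    have hconst : IntegrableOn (fun _ : ℝ => c0 / (2 * s^2)) (Set.Icc (q - s) (q + s)) := by
      apply (integrableOn_const_iff (C := c0 / (2 * s^2))).mpr
      right
      rw [Real.volume_Icc]
      exact ENNReal.ofReal_lt_top
    have h5 : c0 / s ≤ ∫ x in Set.Icc (q - s) (q + s), g x / ((x - E - a η)^2 + (η + b η)^2) := by
      have h6 := setIntegral_mono_on hconst hIntOn hK hlow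
      rw [setIntegral_const, Real.volume_real_Icc, smul_eq_mul,
        max_eq_left (by linarith)] at h6
      calc c0 / s = (q + s - (q - s)) * (c0 / (2 * s^2)) := by field_simp; ring
        _ ≤ _ := h6
    have h7 : (∫ x in Set.Icc (q - s) (q + s), g x / ((x - E - a η)^2 + (η + b η)^2))
        ≤ ∫ x : ℝ, g x / ((x - E - a η)^2 + (η + b η)^2) := by
      apply setIntegral_le_integral (hI_int η hη)
      filter_upwards with x
      have : 0 < (η + b η) := by linarith
      positivity
    have h8 : (∫ x : ℝ, g x / ((x - E - a η)^2 + (η + b η)^2)) ≤ 1 := by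
      rw [hI_eq η hη]
      exact (div_le_one (by linarith)).mpr (by linarith)
    have h9 : c0 / s ≤ 1 := le_trans h5 (le_trans h7 h8)
    have : 2 < c0 / s := by
      rw [lt_div_iff₀ hs_pos]
      linarith
    linarith
  -- dominated convergence
  have hb_half : ∀ᶠ η in l, b0/2 < b η := hb_t.eventually (eventually_gt_nhds (by linarith))
  have hL : Filter.Tendsto (fun η : ℝ => ∫ x : ℝ, g x / ((x - E - a η)^2 + (η + b η)^2)) l
      (nhds (∫ x : ℝ, g x / ((x - E - a0)^2 + b0^2))) := by
    apply tendsto_integral_filter_of_dominated_convergence (fun x => g x / (b0/2)^2)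
    · filter_upwards with η
      apply Measurable.aestronglyMeasurable
      apply hg_cont.measurable.div
      fun_prop
    · filter_upwards [hmem, hb_half] with η hη hbη
      filter_upwards with x
      have hη0 : 0 < η := Set.mem_Ioi.mp hη
      have hD2 : (b0/2)^2 ≤ (x - E - a η)^2 + (η + b η)^2 := by
        nlinarith [sq_nonneg (x - E - a η)]
      rw [Real.norm_eq_abs, abs_of_nonneg (by positivity)]
      exact div_le_div_of_nonneg_left (hg_pos x).le (by positivity) hD2
    · exact hg_int.div_const _
    · filter_upwards with x
      have hdenom : Filter.Tendsto (fun η : ℝ => (x - E - a η)^2 + (η + b η)^2) l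
          (nhds ((x - E - a0)^2 + b0^2)) := by
        have h1 : Filter.Tendsto (fun η : ℝ => (x - E - a η)^2) l (nhds ((x - E - a0)^2)) :=
          (tendsto_const_nhds.sub ha_t).pow 2
        have h2 : Filter.Tendsto (fun η : ℝ => (η + b η)^2) l (nhds (b0^2)) := hs_t.pow 2
        exact h1.add h2
      exact Filter.Tendsto.div tendsto_const_nhds hdenom (by positivity)
  have hR : Filter.Tendsto (fun η : ℝ => b η / (η + b η)) l (nhds 1) := by
    have := hb_t.div hs_t hb0_pos.ne'
    rwa [div_self hb0_pos.ne'] at this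
  have hone : (∫ x : ℝ, g x / ((x - E - a0)^2 + b0^2)) = 1 := by
    refine tendsto_nhds_unique (hL.congr' ?_) hR
    filter_upwards [hmem] with η hη
    exact hI_eq η (Set.mem_Ioi.mp hη)
  have hπ : Real.pi ≠ 0 := Real.pi_ne_zero
  have hb0ρ : b0 = Real.pi * ρfc E := by rw [hρE]; field_simp
  have hρ_pos : 0 < ρfc E := by
    rw [hρE]
    exact mul_pos (inv_pos.2 Real.pi_pos) hb0_pos
  refine ⟨hρ_pos, ?_, ?_⟩
  · apply le_of_tendsto ((continuous_norm.tendsto _).comp (hcont E))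
    filter_upwards [hmem] with η hη
    exact habs _ (by rw [hz_im]; exact Set.mem_Ioi.mp hη)
  · have hgb : ∀ x : ℝ, Real.exp (-x^2/2) = Real.sqrt (2*Real.pi) * g x := by
      intro x
      rw [hgdef]
      simp only
      rw [← mul_assoc, mul_inv_cancel₀ hsq.ne', one_mul]
    have hb2 : Real.pi^2 * ρfc E^2 = b0^2 := by rw [hb0ρ]; ring
    calc Real.sqrt (2*Real.pi)
        = Real.sqrt (2*Real.pi) * ∫ x : ℝ, g x / ((x - E - a0)^2 + b0^2) := by
          rw [hone, mul_one]
      _ = ∫ x : ℝ, Real.sqrt (2*Real.pi) * (g x / ((x - E - a0)^2 + b0^2)) :=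
          (integral_const_mul _ _).symm
      _ = ∫ x : ℝ, Real.exp (-x^2/2) / ((x - E - a0)^2 + Real.pi^2 * ρfc E^2) := by
          apply integral_congr_ae
          filter_upwards with x
          rw [hb2, hgdef]
          simp only
          rw [← mul_div_assoc, ← mul_assoc, mul_inv_cancel₀ hsq.ne', one_mul]

set_option maxHeartbeats 1000000 in
/-- Gaussian tail bound for the free convolution density: if `m_fc` solves the
self-consistent equation on the upper half plane with `Im m_fc ≥ 0` and `|m_fc| ≤ 1`,
extends continuously to the real axis, and `ρ_fc(E) = lim_{η↓0} π⁻¹ Im m_fc(E+iη)`, then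
`√(2π) = ∫ e^{-x²/2} dx / ((x - E - Re m_fc(E))² + π² ρ_fc(E)²)` and consequently
`ρ_fc(E) ≤ e^{-E²/8}` for `|E|` sufficiently large. -/
theorem rho_fc_gaussian_tail (mfc : ℂ → ℂ) (ρfc : ℝ → ℝ)
    (hfix : ∀ z : ℂ, 0 < z.im →
      mfc z = ∫ x : ℝ,
        (((Real.sqrt (2 * Real.pi))⁻¹ * Real.exp (-x ^ 2 / 2) : ℝ) : ℂ) / ((x : ℂ) - z - mfc z))
    (him : ∀ z : ℂ, 0 < z.im → 0 ≤ (mfc z).im)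
    (habs : ∀ z : ℂ, 0 < z.im → ‖mfc z‖ ≤ 1)
    (hcont : ∀ E : ℝ, Filter.Tendsto (fun η : ℝ => mfc ((E : ℂ) + η * Complex.I))
      (nhdsWithin 0 (Set.Ioi 0)) (nhds (mfc (E : ℂ))))
    (hρ : ∀ E : ℝ, Filter.Tendsto
      (fun η : ℝ => Real.pi⁻¹ * (mfc ((E : ℂ) + η * Complex.I)).im)
      (nhdsWithin 0 (Set.Ioi 0)) (nhds (ρfc E))) :
    (∀ E : ℝ, Real.sqrt (2 * Real.pi)
        = ∫ x : ℝ, Real.exp (-x ^ 2 / 2)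
            / ((x - E - (mfc (E : ℂ)).re) ^ 2 + Real.pi ^ 2 * ρfc E ^ 2)) ∧
      ∃ C : ℝ, ∀ E : ℝ, C ≤ |E| → ρfc E ≤ Real.exp (-E ^ 2 / 8) := by
  constructor
  · intro E
    exact (aux_key mfc ρfc hfix him habs hcont hρ E).2.2
  · refine ⟨10, fun E hE => ?_⟩
    obtain ⟨hρ_pos, habs1, hid⟩ := aux_key mfc ρfc hfix him habs hcont hρ E
    set a0 : ℝ := (mfc (E:ℂ)).re with ha0
    have ha0le : |a0| ≤ 1 := le_trans (Complex.abs_re_le_norm _) habs1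
    set p : ℝ := E + a0 with hp
    set c : ℝ := Real.pi * ρfc E with hc
    have hc_pos : 0 < c := mul_pos Real.pi_pos hρ_pos
    have hp_low : |E| - 1 ≤ |p| := by
      have h1 : |E| ≤ |p| + |a0| := by
        calc |E| = |p - a0| := by rw [hp]; ring_nf
          _ ≤ |p| + |a0| := abs_sub _ _
      linarith
    set s : ℝ := |E|/2 + 2 with hs
    have hs_pos : 0 < s := by
      have := abs_nonneg E
      rw [hs]; linarith
    set f : ℝ → ℝ := fun x => Real.exp (-x^2/2) / ((x - p)^2 + c^2) with hf
    clear_value f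
    clear_value s
    clear_value c
    clear_value p
    clear_value a0
    have hid' : Real.sqrt (2*Real.pi) = ∫ x : ℝ, f x := by
      rw [hid]
      apply integral_congr_ae
      filter_upwards with x
      rw [hf]
      simp only
      congr 1
      rw [hp, hc]
      ring
    have hf_nonneg : ∀ x, 0 ≤ f x := by
      intro x
      rw [hf]
      positivity
    have hf_cont : Continuous f := by
      rw [hf]
      apply Continuous.div (by fun_prop) (by fun_prop)
      intro x
      positivity
    have hf_int : Integrable f := by
      apply Integrable.mono' (gauss_integrable'.mul_const (c^2)⁻¹) hf_cont.aestronglyMeasurable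
      filter_upwards with x
      rw [Real.norm_eq_abs, abs_of_nonneg (hf_nonneg x), hf, ← div_eq_mul_inv]
      simp only
      exact div_le_div_of_nonneg_left (Real.exp_pos _).le (by positivity)
        (by nlinarith [sq_nonneg (x - p)])
    have hA : MeasurableSet (Set.Ioo (-s) s) := measurableSet_Ioo
    have hsplit : (∫ x in Set.Ioo (-s) s, f x) + (∫ x in (Set.Ioo (-s) s)ᶜ, f x) = ∫ x : ℝ, f x :=
      integral_add_compl hA hf_int
    -- bound on the bulk
    have h1 : (∫ x in Set.Ioo (-s) s, f x) ≤ Real.sqrt (2*Real.pi)/4 := by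
      have hgd4 : Integrable (fun x : ℝ => Real.exp (-x^2/2)/4) := gauss_integrable'.div_const 4
      have step1 : ∀ x ∈ Set.Ioo (-s) s, f x ≤ Real.exp (-x^2/2)/4 := by
        intro x hx
        rcases hx with ⟨hx1, hx2⟩
        have hxabs : |x| < s := abs_lt.mpr ⟨hx1, hx2⟩
        have hxp : 2 ≤ |x - p| := by
          have : |p| - |x| ≤ |x - p| := by
            calc |p| - |x| ≤ |p - x| := abs_sub_abs_le_abs_sub _ _
              _ = |x - p| := abs_sub_comm _ _
          rw [hs] at hxabs
          linarith
        have hxp2 : 4 ≤ (x - p)^2 := by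
          calc (4:ℝ) = 2^2 := by norm_num
            _ ≤ |x - p|^2 := by nlinarith
            _ = (x - p)^2 := sq_abs _
        rw [hf]
        simp only
        exact div_le_div_of_nonneg_left (Real.exp_pos _).le (by norm_num) (by nlinarith)
      calc (∫ x in Set.Ioo (-s) s, f x) ≤ ∫ x in Set.Ioo (-s) s, Real.exp (-x^2/2)/4 :=
            setIntegral_mono_on hf_int.integrableOn hgd4.integrableOn hA step1
        _ ≤ ∫ x : ℝ, Real.exp (-x^2/2)/4 :=
            setIntegral_le_integral hgd4 (by filter_upwards with x; positivity)
        _ = Real.sqrt (2*Real.pi)/4 := by rw [integral_div, gauss_integral']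
    -- bound on the tail
    have hlor : Integrable (fun x : ℝ => ((x - p)^2 + c^2)⁻¹) := lorentz_integrable p c hc_pos.ne'
    have h2 : (∫ x in (Set.Ioo (-s) s)ᶜ, f x) ≤ Real.exp (-s^2/2) / ρfc E := by
      have hlor2 : Integrable (fun x : ℝ => Real.exp (-s^2/2) * ((x - p)^2 + c^2)⁻¹) :=
        hlor.const_mul _
      have step1 : ∀ x ∈ (Set.Ioo (-s) s)ᶜ, f x ≤ Real.exp (-s^2/2) * ((x - p)^2 + c^2)⁻¹ := by
        intro x hx
        have hxs : s ≤ |x| := by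
          by_contra hcon
          push_neg at hcon
          exact hx (Set.mem_Ioo.mpr (abs_lt.mp hcon))
        have hx2 : s^2 ≤ x^2 := by
          rw [← sq_abs x]
          nlinarith
        have hexp : Real.exp (-x^2/2) ≤ Real.exp (-s^2/2) := by
          apply Real.exp_le_exp.2
          nlinarith [hx2]
        rw [hf]
        simp only
        rw [← div_eq_mul_inv]
        calc Real.exp (-x^2/2) / ((x - p)^2 + c^2) ≤ Real.exp (-s^2/2) / ((x - p)^2 + c^2) :=
              (div_le_div_iff_of_pos_right (by positivity)).mpr hexp
          _ = Real.exp (-s^2/2) * ((x - p)^2 + c^2)⁻¹ := div_eq_mul_inv _ _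
      calc (∫ x in (Set.Ioo (-s) s)ᶜ, f x)
          ≤ ∫ x in (Set.Ioo (-s) s)ᶜ, Real.exp (-s^2/2) * ((x - p)^2 + c^2)⁻¹ :=
            setIntegral_mono_on hf_int.integrableOn hlor2.integrableOn hA.compl step1
        _ ≤ ∫ x : ℝ, Real.exp (-s^2/2) * ((x - p)^2 + c^2)⁻¹ :=
            setIntegral_le_integral hlor2 (by filter_upwards with x; positivity)
        _ = Real.exp (-s^2/2) * (Real.pi / c) := by rw [integral_const_mul, lorentz_integral p hc_pos]
        _ = Real.exp (-s^2/2) / ρfc E := by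
            rw [hc, mul_comm Real.pi (ρfc E)]
            field_simp
    -- combine
    have hsqrt1 : 1 ≤ Real.sqrt (2*Real.pi) := by
      rw [show (1:ℝ) = Real.sqrt 1 from (Real.sqrt_one).symm]
      exact Real.sqrt_le_sqrt (by nlinarith [Real.pi_gt_three])
    have h3 : (3/4) * Real.sqrt (2*Real.pi) ≤ Real.exp (-s^2/2) / ρfc E := by
      have := hid'
      nlinarith [h1, h2, hsplit]
    have h4 : ρfc E * ((3/4) * Real.sqrt (2*Real.pi)) ≤ Real.exp (-s^2/2) := by
      rw [mul_comm]
      exact (le_div_iff₀ hρ_pos).mp h3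
    have h5 : ρfc E ≤ (4/3) * Real.exp (-s^2/2) := by nlinarith
    have hsval : -s^2/2 = -E^2/8 + (-(|E| + 2)) := by
      rw [hs]
      have : |E|^2 = E^2 := sq_abs E
      nlinarith [this]
    have h6 : Real.exp (-s^2/2) = Real.exp (-E^2/8) * Real.exp (-(|E|+2)) := by
      rw [hsval, Real.exp_add]
    have h7 : Real.exp (-(|E|+2)) ≤ 1/3 := by
      have e1 : Real.exp (-(|E|+2)) ≤ Real.exp (-2) := Real.exp_le_exp.2 (by linarith)
      have e2 : (3:ℝ) ≤ Real.exp 2 := by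
        have := Real.add_one_le_exp 2
        linarith
      have e3 : Real.exp (-2) = (Real.exp 2)⁻¹ := Real.exp_neg 2
      rw [e3] at e1
      have : (Real.exp 2)⁻¹ ≤ 1/3 := by
        rw [show (1:ℝ)/3 = 3⁻¹ by norm_num]
        exact inv_anti₀ (by norm_num) e2
      linarith
    calc ρfc E ≤ (4/3) * Real.exp (-s^2/2) := h5
      _ = (4/3) * (Real.exp (-E^2/8) * Real.exp (-(|E|+2))) := by rw [h6]
      _ ≤ (4/3) * (Real.exp (-E^2/8) * (1/3)) := by
          apply mul_le_mul_of_nonneg_left _ (by norm_num)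
          exact mul_le_mul_of_nonneg_left h7 (Real.exp_pos _).le
      _ ≤ Real.exp (-E^2/8) := by nlinarith [Real.exp_pos (-E^2/8)]
end

section
/- Tree bound for resolvent sums (single tree, no marked vertex): Let T be a tree on vertices {1,…,m} and suppose G is an n×n complex matrix such that |G_{ab}| ≤ C for all a,b and moreover (1/n)∑_b |G_{ab}|² ≤ C/(nη) for all a (a Ward-type bound with parameter η > 0 and C ≥ 1). Then (1/n^m) ∑_{i_1,…,i_m = 1}^{n} ∏_{(a,b) ∈ E(T)} |G_{i_a i_b}| ≤ C^{2(m-1)} (nη)^{-(m-1)/2}. -/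
open SimpleGraph

/-- A walk avoiding `v` lifts to the induced graph on the complement of `v`. -/
def walkToInduce {V : Type} {T : SimpleGraph V} {v : V} :
    ∀ {x y : V} (p : T.Walk x y) (hx : x ≠ v) (hy : y ≠ v), v ∉ p.support →
      (T.induce {w | w ≠ v}).Walk ⟨x, hx⟩ ⟨y, hy⟩
  | _, _, SimpleGraph.Walk.nil, _, _, _ => SimpleGraph.Walk.nil
  | _, _, SimpleGraph.Walk.cons (v := z) h p, hx, hy, hp =>
      have hz : z ≠ v := fun hzv => hp (by
        simp only [Walk.support_cons, List.mem_cons]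
        exact Or.inr (hzv ▸ p.start_mem_support))
      SimpleGraph.Walk.cons (by exact h)
        (walkToInduce p hz hy (fun hv => hp (by
          simp only [Walk.support_cons, List.mem_cons]; exact Or.inr hv)))

/-- In a tree, a path between two vertices distinct from a leaf `v` avoids `v`. -/
lemma path_avoids_leaf {V : Type} [DecidableEq V] {T : SimpleGraph V}
    {v u : V} (hnb : ∀ z, T.Adj v z → z = u) {x y : V} (hx : x ≠ v) (hy : y ≠ v)
    (p : T.Walk x y) (hp : p.IsPath) : v ∉ p.support := by
  intro hmem
  have hnodup := hp.support_nodup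
  rw [← p.take_spec hmem, Walk.support_append] at hnodup
  have hdisj := List.disjoint_of_nodup_append hnodup
  set r := p.takeUntil v hmem with hr
  set q := p.dropUntil v hmem with hq
  obtain ⟨z, hz, q', hq'⟩ := q.exists_eq_cons_of_ne (Ne.symm hy)
  have hzu : z = u := hnb z hz
  have hu_q : u ∈ q.support.tail := by
    rw [hq', Walk.support_cons]
    simpa [hzu] using (hzu ▸ q'.start_mem_support)
  obtain ⟨z', hz', r', hr'⟩ := r.reverse.exists_eq_cons_of_ne (Ne.symm hx)
  have hzu' : z' = u := hnb z' hz'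
  have hu_r : u ∈ r.support := by
    have : u ∈ r.reverse.support := by
      rw [hr', Walk.support_cons]
      exact List.mem_cons_of_mem _ (hzu' ▸ r'.start_mem_support)
    rwa [Walk.support_reverse, List.mem_reverse] at this
  exact hdisj hu_r hu_q
open SimpleGraph Finset

lemma tree_sum_le (n : ℕ) (f : Fin n → Fin n → ℝ) (hf0 : ∀ a b, 0 ≤ f a b)
    (hfs : ∀ a b, f a b = f b a) (K : ℝ) (hK : 0 ≤ K) (hrow : ∀ a, ∑ b, f a b ≤ K) :
    ∀ (N : ℕ) (V : Type) (_ : Fintype V) (_ : DecidableEq V) (T : SimpleGraph V)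
      (_ : DecidableRel T.Adj) (_ : T.IsTree) (_ : Fintype.card V = N),
      ∑ i : V → Fin n, ∏ e ∈ T.edgeFinset,
          Sym2.lift ⟨fun a b => f (i a) (i b), fun a b => hfs (i a) (i b)⟩ e
        ≤ n * K ^ (N - 1) := by
  intro N
  induction N using Nat.strong_induction_on with
  | _ N IH =>
  intro V _ _ T _ hT hcard
  have hne : Nonempty V := hT.isConnected.nonempty
  have hN1 : 1 ≤ N := hcard ▸ Fintype.card_pos
  rcases eq_or_lt_of_le hN1 with hN | hN2
  · -- base case : one vertex, no edges
    have hsub : ∀ a b : V, a = b := by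
      intro a b
      have := Fintype.card_le_one_iff.mp (le_of_eq (hcard.trans hN.symm))
      exact this a b
    have hE : T.edgeFinset = ∅ := by
      rw [Finset.eq_empty_iff_forall_notMem]
      intro e he
      induction e with
      | _ a b =>
        rw [mem_edgeFinset, mem_edgeSet] at he
        exact he.ne (hsub a b)
    rw [hE, ← hN]
    simp only [Finset.prod_empty, Finset.sum_const, Finset.card_univ, smul_eq_mul, mul_one,
      pow_zero, Fintype.card_fun, hcard, ← hN, pow_one, Fintype.card_fin, nsmul_eq_mul]
    norm_num
  · -- inductive step
    -- every vertex has a neighbor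
    have hdegpos : ∀ w : V, 0 < T.degree w := by
      intro w
      obtain ⟨w', hw'⟩ := Fintype.exists_ne_of_one_lt_card (hcard ▸ hN2) w
      obtain ⟨p⟩ := hT.isConnected.preconnected w w'
      obtain ⟨z, hz, -, -⟩ := p.exists_eq_cons_of_ne (Ne.symm hw')
      rw [T.degree_pos_iff_exists_adj]
      exact ⟨z, hz⟩
    have hedge : T.edgeFinset.card + 1 = N := hcard ▸ hT.card_edgeFinset
    have hleaf : ∃ v, T.degree v = 1 := by
      by_contra hno
      push_neg at hno
      have h2 : ∀ w : V, 2 ≤ T.degree w := fun w => by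
        have h3 := hdegpos w; have h4 := hno w; omega
      have hsum := T.sum_degrees_eq_twice_card_edges
      have hge : 2 * N ≤ ∑ w, T.degree w := by
        calc 2 * N = ∑ _w : V, 2 := by
              rw [Finset.sum_const, Finset.card_univ, hcard]; ring
          _ ≤ _ := Finset.sum_le_sum (fun w _ => h2 w)
      omega
    obtain ⟨v, hv⟩ := hleaf
    obtain ⟨u, hu⟩ := Finset.card_eq_one.mp hv
    have hadj : T.Adj v u := by
      rw [← mem_neighborFinset, hu]; exact Finset.mem_singleton_self u
    have huv : u ≠ v := hadj.ne'
    have hnb : ∀ z, T.Adj v z → z = u := fun z hz => by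
      have hzz : z ∈ T.neighborFinset v := (T.mem_neighborFinset v z).mpr hz
      rwa [hu, Finset.mem_singleton] at hzz
    have he₀ : s(v,u) ∈ T.edgeFinset := by
      rw [mem_edgeFinset, mem_edgeSet]; exact hadj
    have hedgev : ∀ e ∈ T.edgeFinset, v ∈ e → e = s(v,u) := by
      intro e
      induction e with
      | _ a b =>
        intro he hve
        rw [mem_edgeFinset, mem_edgeSet] at he
        rcases Sym2.mem_iff.mp hve with h1 | h2
        · subst h1; rw [hnb b he]
        · subst h2; rw [hnb a he.symm]; exact Sym2.eq_swap
    -- the induced graph on the complement of v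
    set s : Set V := {w | w ≠ v} with hs
    haveI : DecidablePred (· ∈ s) := Classical.decPred _
    set T' := T.induce s with hT'def
    haveI : DecidableRel T'.Adj := fun a b => ‹DecidableRel T.Adj› a.1 b.1
    have hT'tree : T'.IsTree := by
      constructor
      · haveI : Nonempty s := ⟨⟨u, huv⟩⟩
        apply Connected.mk
        intro x y
        obtain ⟨p⟩ := hT.isConnected.preconnected x.1 y.1
        have hpath := p.toPath
        have havoid := path_avoids_leaf hnb x.2 y.2 hpath.1 hpath.2
        exact ⟨walkToInduce hpath.1 x.2 y.2 havoid⟩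
      · rw [isAcyclic_iff_path_unique]
        intro a b p q
        have huniq := isAcyclic_iff_path_unique.mp hT.IsAcyclic
          (Path.mapEmbedding (Embedding.induce s) p) (Path.mapEmbedding (Embedding.induce s) q)
        exact Path.mapEmbedding_injective (Embedding.induce s) a b huniq
    have hcard' : Fintype.card s = N - 1 := by
      have hcc : Fintype.card s = Fintype.card {w : V // w ≠ v} :=
        Fintype.card_congr (Equiv.subtypeEquivRight (fun w => Iff.rfl))
      rw [hcc]; simp [Fintype.card_subtype_compl, hcard]
    have hIH := IH (N-1) (by omega) s inferInstance inferInstance T' inferInstance hT'tree hcard'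
    -- key product identity
    have hprod : ∀ (i : V → Fin n) (j : s → Fin n), (∀ w : s, i w.1 = j w) →
        ∏ e ∈ T.edgeFinset.erase s(v,u),
          Sym2.lift ⟨fun a b => f (i a) (i b), fun a b => hfs (i a) (i b)⟩ e
        = ∏ e ∈ T'.edgeFinset,
          Sym2.lift ⟨fun a b => f (j a) (j b), fun a b => hfs (j a) (j b)⟩ e := by
      intro i j hij
      refine (Finset.prod_bij (fun e _ => Sym2.map Subtype.val e) ?_ ?_ ?_ ?_).symm
      · intro e he
        induction e with
        | _ a b =>
          rw [mem_edgeFinset, mem_edgeSet] at he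
          rw [Finset.mem_erase]
          refine ⟨?_, ?_⟩
          · intro hcontra
            simp only [Sym2.map_pair_eq] at hcontra
            have hvm : v ∈ s(a.1, b.1) := hcontra ▸ Sym2.mem_mk_left v u
            rcases Sym2.mem_iff.mp hvm with h | h
            exacts [a.2 h.symm, b.2 h.symm]
          · simp only [Sym2.map_pair_eq, mem_edgeFinset, mem_edgeSet]; exact he
      · intro e1 h1 e2 h2 heq
        exact Sym2.map.injective Subtype.val_injective heq
      · intro e he
        induction e with
        | _ a b =>
          rw [Finset.mem_erase, mem_edgeFinset, mem_edgeSet] at he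
          obtain ⟨hne, hadj'⟩ := he
          have ha : a ≠ v := fun h => hne (by
            subst h
            exact hedgev _ (by rw [mem_edgeFinset, mem_edgeSet]; exact hadj')
              (Sym2.mem_mk_left _ _))
          have hb : b ≠ v := fun h => hne (by
            subst h
            exact hedgev _ (by rw [mem_edgeFinset, mem_edgeSet]; exact hadj')
              (Sym2.mem_mk_right _ _))
          exact ⟨s(⟨a, ha⟩, ⟨b, hb⟩),
            (by rw [mem_edgeFinset, mem_edgeSet]; exact hadj'),
            (by simp only [Sym2.map_pair_eq])⟩
      · intro e he
        induction e with
        | _ a b =>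
          simp only [Sym2.map_pair_eq, Sym2.lift_mk]
          rw [hij a, hij b]
    -- nonnegativity of the induced product
    have hQ0 : ∀ j : s → Fin n, 0 ≤ ∏ e ∈ T'.edgeFinset,
        Sym2.lift ⟨fun a b => f (j a) (j b), fun a b => hfs (j a) (j b)⟩ e := by
      intro j
      refine Finset.prod_nonneg (fun e _ => ?_)
      induction e with
      | _ a b => rw [Sym2.lift_mk]; exact hf0 _ _
    -- split the sum over the leaf coordinate
    set u' : s := ⟨u, huv⟩ with hu'def
    set E : (V → Fin n) ≃ Fin n × (s → Fin n) := Equiv.funSplitAt v (Fin n) with hEdef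
    have hEv : ∀ (b : Fin n) (j : s → Fin n), (E.symm (b, j)) v = b := by
      intro b j; rw [hEdef]; exact dif_pos rfl
    have hEw : ∀ (b : Fin n) (j : s → Fin n) (w : s), (E.symm (b, j)) w.1 = j w := by
      intro b j w
      rw [hEdef]; exact dif_neg w.2
    have hrow' : ∀ a : Fin n, ∑ b : Fin n, f b a ≤ K := by
      intro a
      calc ∑ b : Fin n, f b a = ∑ b : Fin n, f a b :=
            Finset.sum_congr rfl (fun b _ => hfs b a)
        _ ≤ K := hrow a
    calc ∑ i : V → Fin n, ∏ e ∈ T.edgeFinset,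
            Sym2.lift ⟨fun a b => f (i a) (i b), fun a b => hfs (i a) (i b)⟩ e
        = ∑ p : Fin n × (s → Fin n), ∏ e ∈ T.edgeFinset,
            Sym2.lift ⟨fun a b => f (E.symm p a) (E.symm p b),
              fun a b => hfs (E.symm p a) (E.symm p b)⟩ e := by
          exact (Equiv.sum_comp E.symm _).symm
      _ = ∑ j : s → Fin n, ∑ b : Fin n, ∏ e ∈ T.edgeFinset,
            Sym2.lift ⟨fun a c => f (E.symm (b, j) a) (E.symm (b, j) c),
              fun a c => hfs (E.symm (b, j) a) (E.symm (b, j) c)⟩ e := by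
          rw [Fintype.sum_prod_type_right]
      _ = ∑ j : s → Fin n, ∑ b : Fin n, f b (j u') *
            ∏ e ∈ T'.edgeFinset,
              Sym2.lift ⟨fun a c => f (j a) (j c), fun a c => hfs (j a) (j c)⟩ e := by
          refine Finset.sum_congr rfl (fun j _ => Finset.sum_congr rfl (fun b _ => ?_))
          rw [← Finset.mul_prod_erase T.edgeFinset _ he₀]
          simp only [Sym2.lift_mk]
          rw [hEv b j, hprod (E.symm (b, j)) j (hEw b j),
            show (E.symm (b, j)) u = j u' from hEw b j u']
      _ = ∑ j : s → Fin n, (∏ e ∈ T'.edgeFinset,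
            Sym2.lift ⟨fun a c => f (j a) (j c), fun a c => hfs (j a) (j c)⟩ e) *
            ∑ b : Fin n, f b (j u') := by
          refine Finset.sum_congr rfl (fun j _ => ?_)
          rw [Finset.mul_sum]
          exact Finset.sum_congr rfl (fun b _ => mul_comm _ _)
      _ ≤ ∑ j : s → Fin n, (∏ e ∈ T'.edgeFinset,
            Sym2.lift ⟨fun a c => f (j a) (j c), fun a c => hfs (j a) (j c)⟩ e) * K := by
          refine Finset.sum_le_sum (fun j _ => ?_)
          exact mul_le_mul_of_nonneg_left (hrow' (j u')) (hQ0 j)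
      _ = (∑ j : s → Fin n, ∏ e ∈ T'.edgeFinset,
            Sym2.lift ⟨fun a c => f (j a) (j c), fun a c => hfs (j a) (j c)⟩ e) * K := by
          rw [Finset.sum_mul]
      _ ≤ (n * K ^ (N - 1 - 1)) * K := mul_le_mul_of_nonneg_right hIH hK
      _ = n * K ^ (N - 1) := by
          rw [mul_assoc, ← pow_succ]
          congr 2
          omega

/-- Tree bound for resolvent sums: if `T` is a tree on `m` vertices and `A` is an `n×n`
complex matrix with symmetric absolute values, entries bounded by `C ≥ 1`, and satisfying
the Ward-type bound `(1/n) ∑_b |A_{ab}|² ≤ C/(nη)`, then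
`(1/n^m) ∑_{i₁,…,i_m} ∏_{(a,b) ∈ E(T)} |A_{i_a i_b}| ≤ C^{2(m-1)} (nη)^{-(m-1)/2}`. -/
theorem tree_resolvent_bound (m n : ℕ) (T : SimpleGraph (Fin m)) [DecidableRel T.Adj]
    (hT : T.IsTree) (η C : ℝ) (hη : 0 < η) (hC : 1 ≤ C) (hn : 0 < n)
    (A : Matrix (Fin n) (Fin n) ℂ)
    (hsym : ∀ a b, ‖A a b‖ = ‖A b a‖)
    (hbd : ∀ a b, ‖A a b‖ ≤ C)
    (hward : ∀ a : Fin n, (1 / (n : ℝ)) * ∑ b, ‖A a b‖ ^ 2 ≤ C / (n * η)) :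
    (1 / (n : ℝ) ^ m) * ∑ i : Fin m → Fin n, ∏ e ∈ T.edgeFinset,
        Sym2.lift ⟨fun a b => ‖A (i a) (i b)‖, fun a b => hsym (i a) (i b)⟩ e
      ≤ C ^ (2 * (m - 1)) * ((n : ℝ) * η) ^ (-(((m : ℝ) - 1) / 2)) := by
  classical
  have hmpos : 0 < m := Fin.pos_iff_nonempty.mpr hT.isConnected.nonempty
  set k := m - 1 with hk
  have hnR : (0:ℝ) < n := by exact_mod_cast hn
  have hCpos : (0:ℝ) < C := lt_of_lt_of_le one_pos hC
  have hnη : (0:ℝ) < (n:ℝ) * η := mul_pos hnR hη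
  have hnm : (0:ℝ) < (n:ℝ) ^ m := pow_pos hnR m
  have hkr : ((m:ℝ) - 1) = (k : ℝ) := by
    rw [hk, Nat.cast_sub hmpos]; norm_num
  have hrow : ∀ a : Fin n, ∑ b, ‖A a b‖ ^ 2 ≤ C / η := by
    intro a
    have h2 : (n:ℝ) * ((1/(n:ℝ)) * ∑ b, ‖A a b‖ ^ 2)
        ≤ (n:ℝ) * (C / ((n:ℝ)*η)) := mul_le_mul_of_nonneg_left (hward a) hnR.le
    calc ∑ b, ‖A a b‖ ^ 2
        = (n:ℝ) * ((1/(n:ℝ)) * ∑ b, ‖A a b‖ ^ 2) := by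
          field_simp
      _ ≤ (n:ℝ) * (C / ((n:ℝ)*η)) := h2
      _ = C / η := by field_simp
  have H2 := tree_sum_le n (fun a b => ‖A a b‖ ^ 2)
    (fun a b => sq_nonneg _) (fun a b => by simp only [hsym a b]) (C/η)
    (div_nonneg hCpos.le hη.le) hrow m (Fin m) inferInstance inferInstance T
    inferInstance hT (Fintype.card_fin m)
  set S := ∑ i : Fin m → Fin n, ∏ e ∈ T.edgeFinset,
      Sym2.lift ⟨fun a b => ‖A (i a) (i b)‖, fun a b => hsym (i a) (i b)⟩ e
    with hSdef
  have hS0 : 0 ≤ S := by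
    refine Finset.sum_nonneg (fun i _ => Finset.prod_nonneg (fun e _ => ?_))
    induction e with
    | _ a b => rw [Sym2.lift_mk]; exact norm_nonneg _
  have hsq : ∀ i : Fin m → Fin n,
      (∏ e ∈ T.edgeFinset,
        Sym2.lift ⟨fun a b => ‖A (i a) (i b)‖, fun a b => hsym (i a) (i b)⟩ e) ^ 2
      = ∏ e ∈ T.edgeFinset,
        Sym2.lift ⟨fun a b => (fun a b => ‖A a b‖ ^ 2) (i a) (i b),
          fun a b => by simp only [hsym (i a) (i b)]⟩ e := by
    intro i
    rw [← Finset.prod_pow]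
    refine Finset.prod_congr rfl (fun e _ => ?_)
    induction e with
    | _ a b => simp [Sym2.lift_mk]
  have hcs := sq_sum_le_card_mul_sum_sq
    (s := (Finset.univ : Finset (Fin m → Fin n)))
    (f := fun i => ∏ e ∈ T.edgeFinset,
      Sym2.lift ⟨fun a b => ‖A (i a) (i b)‖, fun a b => hsym (i a) (i b)⟩ e)
  have hcard : (((Finset.univ : Finset (Fin m → Fin n)).card : ℕ) : ℝ) = (n:ℝ) ^ m := by
    rw [Finset.card_univ, Fintype.card_fun]
    push_cast [Fintype.card_fin]
    ring
  have e2 : S ^ 2 ≤ (n:ℝ)^m * ((n:ℝ) * (C/η)^k) := by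
    calc S ^ 2 ≤ _ := hcs
      _ = (n:ℝ)^m * ∑ i : Fin m → Fin n, ∏ e ∈ T.edgeFinset,
            Sym2.lift ⟨fun a b => (fun a b => ‖A a b‖ ^ 2) (i a) (i b),
              fun a b => by simp only [hsym (i a) (i b)]⟩ e := by
          rw [hcard]
          congr 1
          exact Finset.sum_congr rfl (fun i _ => hsq i)
      _ ≤ (n:ℝ)^m * ((n:ℝ) * (C/η)^k) := by
          refine mul_le_mul_of_nonneg_left ?_ (by positivity)
          exact H2
  -- the rpow quantity
  have hupos : (0:ℝ) < ((n:ℝ)*η) ^ (((k:ℝ))/2) := Real.rpow_pos_of_pos hnη _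
  have husq : (((n:ℝ)*η) ^ (((k:ℝ))/2)) ^ 2 = ((n:ℝ)*η) ^ k := by
    rw [sq, ← Real.rpow_add hnη, add_halves, Real.rpow_natCast]
  rw [hkr, Real.rpow_neg hnη.le, one_div_mul_eq_div, ← div_eq_mul_inv,
    div_le_div_iff₀ hnm hupos]
  have key : (S * ((n:ℝ)*η) ^ (((k:ℝ))/2)) ^ 2 ≤ (C ^ (2*k) * (n:ℝ)^m) ^ 2 := by
    calc (S * ((n:ℝ)*η) ^ (((k:ℝ))/2)) ^ 2
        = S^2 * ((n:ℝ)*η)^k := by rw [mul_pow, husq]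
      _ ≤ ((n:ℝ)^m * ((n:ℝ) * (C/η)^k)) * ((n:ℝ)*η)^k := by
          exact mul_le_mul_of_nonneg_right e2 (by positivity)
      _ = (n:ℝ)^m * (n:ℝ) * ((C/η) * ((n:ℝ)*η))^k := by
          rw [mul_pow]; ring
      _ = (n:ℝ)^m * (n:ℝ) * (C * (n:ℝ))^k := by
          have hce : (C/η) * ((n:ℝ)*η) = C * (n:ℝ) := by field_simp
          rw [hce]
      _ = C^k * (n:ℝ)^(m + 1 + k) := by
          rw [mul_pow, pow_add, pow_add, pow_one]; ring
      _ ≤ C^(4*k) * (n:ℝ)^(2*m) := by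
          have hnn : m + 1 + k = 2*m := by omega
          rw [hnn]
          exact mul_le_mul_of_nonneg_right (pow_le_pow_right₀ hC (by omega)) (by positivity)
      _ = (C ^ (2*k) * (n:ℝ)^m) ^ 2 := by
          rw [mul_pow, ← pow_mul, ← pow_mul]
          ring_nf
  exact (pow_le_pow_iff_left₀ (by positivity) (by positivity) two_ne_zero).mp key
end

section
/- Graph bound for resolvent sums: Let 𝒢 be a connected graph on m vertices with E edges (multi-edges and loops allowed), and G an n×n complex matrix with |G_{ab}| ≤ C (C ≥ 1) and (1/n)∑_b |G_{ab}|² ≤ C/(nη) for all a, for some η > 0. Then (1/n^m) ∑_{i_1,…,i_m=1}^n ∏_{(a,b)∈𝒢} |G_{i_a i_b}| ≤ C^{E+m-1} (nη)^{-(m-1)/2}. -/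
private lemma list_prod_nonneg' {l : List ℝ} (h : ∀ x ∈ l, 0 ≤ x) : 0 ≤ l.prod := by
  induction l with
  | nil => simp
  | cons a l ih =>
    simp only [List.prod_cons]
    exact mul_nonneg (h a (by simp)) (ih fun x hx => h x (List.mem_cons_of_mem _ hx))

private lemma list_prod_le_pow' {l : List ℝ} {C : ℝ} (hC : 0 ≤ C)
    (h : ∀ x ∈ l, 0 ≤ x) (h2 : ∀ x ∈ l, x ≤ C) : l.prod ≤ C ^ l.length := by
  induction l with
  | nil => simp
  | cons a l ih =>
    simp only [List.prod_cons, List.length_cons, pow_succ]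
    rw [mul_comm (C ^ l.length) C]
    exact mul_le_mul (h2 a (by simp))
      (ih (fun x hx => h x (List.mem_cons_of_mem _ hx))
          (fun x hx => h2 x (List.mem_cons_of_mem _ hx)))
      (list_prod_nonneg' fun x hx => h x (List.mem_cons_of_mem _ hx)) hC

private lemma walk_avoid_reachable {V : Type*} {R R' : V → V → Prop} {a : V}
    (hRR : ∀ x y, x ≠ a → y ≠ a → R x y → R' x y) :
    ∀ {u v : V} (w : (SimpleGraph.fromRel R).Walk u v), a ∉ w.support →
      (SimpleGraph.fromRel R').Reachable u v := by
  intro u v w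
  induction w with
  | nil => exact fun _ => SimpleGraph.Reachable.refl _
  | @cons u x v hadj p ih =>
    intro hs
    rw [SimpleGraph.Walk.support_cons, List.mem_cons] at hs
    push_neg at hs
    have hu : u ≠ a := fun h => hs.1 h.symm
    have hx : x ≠ a := fun h => hs.2 (h ▸ p.start_mem_support)
    rw [SimpleGraph.fromRel_adj] at hadj
    have hadj' : (SimpleGraph.fromRel R').Adj u x :=
      (SimpleGraph.fromRel_adj R' u x).2
        ⟨hadj.1, hadj.2.imp (hRR u x hu hx) (hRR x u hx hu)⟩
    exact hadj'.reachable.trans (ih hs.2)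

set_option maxHeartbeats 1000000 in
private lemma key_bound (n : ℕ) (hn : 0 < n) (η C : ℝ) (hη : 0 < η) (hC : 1 ≤ C)
    (A : Matrix (Fin n) (Fin n) ℂ)
    (hsym : ∀ a b, ‖A a b‖ = ‖A b a‖)
    (hbd : ∀ a b, ‖A a b‖ ≤ C)
    (hward : ∀ a : Fin n, (1 / (n : ℝ)) * ∑ b, ‖A a b‖ ^ 2 ≤ C / (n * η))
    (V : Type) [Fintype V] [DecidableEq V] :
    ∀ (N : ℕ) (s : Finset V) (r : V), s.card = N → r ∈ s →
    ∀ L : List (V × V), (∀ e ∈ L, e.1 ∈ s ∧ e.2 ∈ s) →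
    (∀ v ∈ s, (SimpleGraph.fromRel fun x y => (x, y) ∈ L).Reachable v r) →
    ∑ i : V → Fin n, (L.map fun e => ‖A (i e.1) (i e.2)‖).prod
      ≤ (n : ℝ) ^ Fintype.card V * C ^ (L.length + N - 1) *
        ((n : ℝ) * η) ^ (-(((N : ℝ) - 1) / 2)) := by
  have hC0 : (0:ℝ) < C := lt_of_lt_of_le one_pos hC
  have hn' : (0:ℝ) < (n:ℝ) := by exact_mod_cast hn
  have hD : (0:ℝ) < (n:ℝ) * η := mul_pos hn' hη
  set K : ℝ := ((n : ℝ) * η) ^ (-(1:ℝ)/2) with hKdef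
  have hK0 : 0 < K := Real.rpow_pos_of_pos hD _
  -- column sum bound via Cauchy-Schwarz + Ward
  have hcol : ∀ c : Fin n, ∑ x : Fin n, ‖A x c‖ ≤ (n:ℝ) * (C * K) := by
    intro c
    have h1 : (∑ x : Fin n, ‖A x c‖) ^ 2
        ≤ (n:ℝ) * ∑ x : Fin n, ‖A x c‖ ^ 2 := by
      simpa using sq_sum_le_card_mul_sum_sq (s := (Finset.univ : Finset (Fin n)))
        (f := fun x => ‖A x c‖)
    have h2 : ∑ x : Fin n, ‖A x c‖ ^ 2 = ∑ x : Fin n, ‖A c x‖ ^ 2 :=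
      Finset.sum_congr rfl fun x _ => by rw [hsym]
    have h3 : ∑ x : Fin n, ‖A c x‖ ^ 2 ≤ (n:ℝ) * (C / ((n:ℝ)*η)) := by
      have h := mul_le_mul_of_nonneg_left (hward c) hn'.le
      calc ∑ x : Fin n, ‖A c x‖ ^ 2
          = (n:ℝ) * ((1/(n:ℝ)) * ∑ x : Fin n, ‖A c x‖ ^ 2) := by
            field_simp
        _ ≤ (n:ℝ) * (C / ((n:ℝ)*η)) := h
    have hK2 : K ^ 2 = ((n:ℝ)*η)⁻¹ := by
      have h2' : (-(1:ℝ)/2) * ((2:ℕ):ℝ) = -1 := by push_cast; ring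
      rw [hKdef, ← Real.rpow_natCast (((n:ℝ)*η) ^ (-(1:ℝ)/2)) 2, ← Real.rpow_mul hD.le, h2',
        Real.rpow_neg_one]
    have hsq : (∑ x : Fin n, ‖A x c‖) ^ 2 ≤ ((n:ℝ) * (C * K)) ^ 2 := by
      have hCC : C ≤ C ^ 2 := by nlinarith
      calc (∑ x : Fin n, ‖A x c‖) ^ 2
          ≤ (n:ℝ) * ((n:ℝ) * (C / ((n:ℝ)*η))) := by
            refine le_trans h1 ?_
            exact mul_le_mul_of_nonneg_left (h2 ▸ h3) hn'.le
        _ = (n:ℝ)^2 * C * ((n:ℝ)*η)⁻¹ := by field_simp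
        _ ≤ (n:ℝ)^2 * C^2 * ((n:ℝ)*η)⁻¹ := by
            have h0 : (0:ℝ) ≤ ((n:ℝ)*η)⁻¹ := by positivity
            exact mul_le_mul_of_nonneg_right
              (mul_le_mul_of_nonneg_left hCC (by positivity)) h0
        _ = ((n:ℝ) * (C * K)) ^ 2 := by rw [mul_pow, mul_pow, hK2]; ring
    have hs1 : 0 ≤ ∑ x : Fin n, ‖A x c‖ :=
      Finset.sum_nonneg fun x _ => norm_nonneg _
    have hs2 : 0 ≤ (n:ℝ) * (C * K) := by positivity
    have := Real.sqrt_le_sqrt hsq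
    rwa [Real.sqrt_sq hs1, Real.sqrt_sq hs2] at this
  intro N
  induction N with
  | zero =>
    intro s r hcard hr
    exfalso
    have : 0 < s.card := Finset.card_pos.mpr ⟨r, hr⟩
    omega
  | succ N ih =>
    intro s r hcard hr L hL hreach
    by_cases hone : ∀ v ∈ s, v = r
    · -- base case : s = {r}
      have hs1 : s = {r} := Finset.eq_singleton_iff_unique_mem.mpr ⟨hr, hone⟩
      have hN : N = 0 := by
        have := hcard
        rw [hs1, Finset.card_singleton] at this
        omega
      subst hN
      have hb1 : ∀ i : V → Fin n,
          (L.map fun e => ‖A (i e.1) (i e.2)‖).prod ≤ C ^ L.length := by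
        intro i
        have := list_prod_le_pow' (l := L.map fun e => ‖A (i e.1) (i e.2)‖)
          hC0.le
          (by intro x hx; obtain ⟨e, _, rfl⟩ := List.mem_map.mp hx; exact norm_nonneg _)
          (by intro x hx; obtain ⟨e, _, rfl⟩ := List.mem_map.mp hx; exact hbd _ _)
        rwa [List.length_map] at this
      calc ∑ i : V → Fin n, (L.map fun e => ‖A (i e.1) (i e.2)‖).prod
          ≤ ∑ _i : V → Fin n, C ^ L.length := Finset.sum_le_sum fun i _ => hb1 i
        _ = (n:ℝ) ^ Fintype.card V * C ^ L.length := by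
            rw [Finset.sum_const, Finset.card_univ, nsmul_eq_mul]
            simp [Fintype.card_fun]
        _ ≤ (n : ℝ) ^ Fintype.card V * C ^ (L.length + (0 + 1) - 1) *
              ((n : ℝ) * η) ^ (-(((((0:ℕ) + 1 : ℕ) : ℝ) - 1) / 2)) := by
            norm_num
    · -- inductive step
      push_neg at hone
      obtain ⟨v₀, hv₀s, hv₀r⟩ := hone
      set G := SimpleGraph.fromRel fun x y => (x, y) ∈ L with hGdef
      obtain ⟨a, has, hamax⟩ := Finset.exists_max_image s (G.dist r) ⟨r, hr⟩
      have hreach' : ∀ v ∈ s, G.Reachable r v := fun v hv => (hreach v hv).symm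
      have hd0 : 0 < G.dist r v₀ :=
        (hreach' v₀ hv₀s).pos_dist_of_ne (Ne.symm hv₀r)
      have har : a ≠ r := by
        intro h
        have h2 := hamax v₀ hv₀s
        rw [h, SimpleGraph.dist_self] at h2
        omega
      have hN1 : 1 ≤ N := by
        by_contra h
        have hN0 : N = 0 := by omega
        have hc1 : s.card = 1 := by omega
        obtain ⟨x, hx⟩ := Finset.card_eq_one.mp hc1
        rw [hx, Finset.mem_singleton] at has hr
        exact har (has.trans hr.symm)
      -- find neighbor b of a
      obtain ⟨p, hp⟩ := (hreach' a has).exists_walk_length_eq_dist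
      obtain ⟨b, hb, q, hq⟩ := SimpleGraph.Walk.exists_eq_cons_of_ne har p.reverse
      have hba : b ≠ a := hb.ne'
      have hedge : (a, b) ∈ L ∨ (b, a) ∈ L := ((SimpleGraph.fromRel_adj _ _ _).1 hb).2
      have hbs : b ∈ s := by
        rcases hedge with h | h
        · exact (hL _ h).2
        · exact (hL _ h).1
      classical
      set far : V × V → Bool := fun e => decide (e.1 ≠ a ∧ e.2 ≠ a) with hfardef
      set Lf := L.filter far with hLf
      set Ln := L.filter (fun e => !far e) with hLn
      have hperm : (Lf ++ Ln).Perm L := List.filter_append_perm far L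
      set s' := s.erase a with hs'
      have hcard' : s'.card = N := by
        rw [hs', Finset.card_erase_of_mem has, hcard]
        omega
      have hr' : r ∈ s' := Finset.mem_erase.mpr ⟨Ne.symm har, hr⟩
      have hmemLf : ∀ e, e ∈ Lf ↔ e ∈ L ∧ (e.1 ≠ a ∧ e.2 ≠ a) := by
        intro e
        rw [hLf, List.mem_filter, hfardef]
        simp
      have hL' : ∀ e ∈ Lf, e.1 ∈ s' ∧ e.2 ∈ s' := by
        intro e he
        obtain ⟨heL, h1, h2⟩ := (hmemLf e).1 he
        exact ⟨Finset.mem_erase.mpr ⟨h1, (hL e heL).1⟩, Finset.mem_erase.mpr ⟨h2, (hL e heL).2⟩⟩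
      have hreach'' : ∀ v ∈ s',
          (SimpleGraph.fromRel fun x y => (x, y) ∈ Lf).Reachable v r := by
        intro v hv
        obtain ⟨hva, hvs⟩ := Finset.mem_erase.mp hv
        obtain ⟨w, hw⟩ := (hreach' v hvs).exists_walk_length_eq_dist
        have hsup : a ∉ w.support := by
          intro hmem
          have h1 : G.dist r a ≤ (w.takeUntil a hmem).length := SimpleGraph.dist_le _
          have h2 : G.dist a v ≤ (w.dropUntil a hmem).length := SimpleGraph.dist_le _
          have h3 : (w.takeUntil a hmem).length + (w.dropUntil a hmem).length = w.length := by
            have h4 := congrArg SimpleGraph.Walk.length (w.take_spec hmem)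
            rwa [SimpleGraph.Walk.length_append] at h4
          have h4 : 0 < G.dist a v := by
            have hra : G.Reachable a v := (hreach a has).trans (hreach v hvs).symm
            exact hra.pos_dist_of_ne (Ne.symm hva)
          have h5 : G.dist r v ≤ G.dist r a := hamax v hvs
          omega
        have htr := walk_avoid_reachable
          (R := fun x y => (x, y) ∈ L) (R' := fun x y => (x, y) ∈ Lf) (a := a)
          (fun x y hx hy hmem => (hmemLf (x, y)).2 ⟨hmem, hx, hy⟩) w hsup
        exact htr.symm
      have hIH := ih s' r hcard' hr' Lf hL' hreach''
      -- special near edge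
      obtain ⟨e₀, he₀L, hfar0, hfe₀⟩ : ∃ e₀, e₀ ∈ L ∧ far e₀ = false ∧
          ∀ i : V → Fin n, ‖A (i e₀.1) (i e₀.2)‖ = ‖A (i a) (i b)‖ := by
        rcases hedge with h | h
        · exact ⟨(a, b), h, by simp [hfardef], fun i => rfl⟩
        · exact ⟨(b, a), h, by simp [hfardef], fun i => hsym _ _⟩
      have he₀n : e₀ ∈ Ln := by
        rw [hLn, List.mem_filter]
        exact ⟨he₀L, by rw [hfar0]; rfl⟩
      obtain ⟨l₁, l₂, hsplit⟩ := List.append_of_mem he₀n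
      set F : (V → Fin n) → ℝ :=
        fun i => (Lf.map fun e => ‖A (i e.1) (i e.2)‖).prod with hFdef
      have hF0 : ∀ i, 0 ≤ F i := by
        intro i
        exact list_prod_nonneg' (by
          intro x hx; obtain ⟨e, _, rfl⟩ := List.mem_map.mp hx; exact norm_nonneg _)
      set t' := l₁.length + l₂.length with ht'
      have key1 : ∀ i : V → Fin n,
          (L.map fun e => ‖A (i e.1) (i e.2)‖).prod
          = F i * ((l₁ ++ e₀ :: l₂).map fun e => ‖A (i e.1) (i e.2)‖).prod := by
        intro i
        have h := (hperm.map fun e => ‖A (i e.1) (i e.2)‖).prod_eq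
        rw [← h, List.map_append, List.prod_append, hsplit, hFdef]
      have key2 : ∀ i : V → Fin n,
          ((l₁ ++ e₀ :: l₂).map fun e => ‖A (i e.1) (i e.2)‖).prod
          ≤ C ^ t' * ‖A (i a) (i b)‖ := by
        intro i
        rw [List.map_append, List.prod_append, List.map_cons, List.prod_cons, hfe₀ i]
        have hq1 : (l₁.map fun e => ‖A (i e.1) (i e.2)‖).prod ≤ C ^ l₁.length := by
          have := list_prod_le_pow' (l := l₁.map fun e => ‖A (i e.1) (i e.2)‖)
            hC0.le
            (by intro x hx; obtain ⟨e, _, rfl⟩ := List.mem_map.mp hx; exact norm_nonneg _)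
            (by intro x hx; obtain ⟨e, _, rfl⟩ := List.mem_map.mp hx; exact hbd _ _)
          rwa [List.length_map] at this
        have hq2 : (l₂.map fun e => ‖A (i e.1) (i e.2)‖).prod ≤ C ^ l₂.length := by
          have := list_prod_le_pow' (l := l₂.map fun e => ‖A (i e.1) (i e.2)‖)
            hC0.le
            (by intro x hx; obtain ⟨e, _, rfl⟩ := List.mem_map.mp hx; exact norm_nonneg _)
            (by intro x hx; obtain ⟨e, _, rfl⟩ := List.mem_map.mp hx; exact hbd _ _)
          rwa [List.length_map] at this
        have hq3 : 0 ≤ (l₁.map fun e => ‖A (i e.1) (i e.2)‖).prod :=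
          list_prod_nonneg' (by
            intro x hx; obtain ⟨e, _, rfl⟩ := List.mem_map.mp hx; exact norm_nonneg _)
        have hq4 : 0 ≤ (l₂.map fun e => ‖A (i e.1) (i e.2)‖).prod :=
          list_prod_nonneg' (by
            intro x hx; obtain ⟨e, _, rfl⟩ := List.mem_map.mp hx; exact norm_nonneg _)
        calc (l₁.map fun e => ‖A (i e.1) (i e.2)‖).prod *
              (‖A (i a) (i b)‖ *
                (l₂.map fun e => ‖A (i e.1) (i e.2)‖).prod)
            ≤ C ^ l₁.length * (‖A (i a) (i b)‖ * C ^ l₂.length) := by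
              apply mul_le_mul hq1 _ (mul_nonneg (norm_nonneg _) hq4) (by positivity)
              exact mul_le_mul_of_nonneg_left hq2 (norm_nonneg _)
          _ = C ^ t' * ‖A (i a) (i b)‖ := by
              rw [ht', pow_add]; ring
      -- splitting the sum at vertex a
      set eqv := Equiv.funSplitAt a (Fin n) with heqv
      have hsymm_ne : ∀ (x : Fin n) (g : {j // j ≠ a} → Fin n) (j : V) (h : j ≠ a),
          eqv.symm (x, g) j = g ⟨j, h⟩ := by
        intro x g j h
        simp [heqv, Equiv.funSplitAt, Equiv.piSplitAt, h]
      have hsymm_a : ∀ (x : Fin n) (g : {j // j ≠ a} → Fin n), eqv.symm (x, g) a = x := by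
        intro x g
        simp [heqv, Equiv.funSplitAt, Equiv.piSplitAt]
      set x₀ : Fin n := ⟨0, hn⟩ with hx₀
      have hFx : ∀ (x : Fin n) (g : {j // j ≠ a} → Fin n),
          F (eqv.symm (x, g)) = F (eqv.symm (x₀, g)) := by
        intro x g
        simp only [hFdef]
        refine congrArg List.prod (List.map_congr_left fun e he => ?_)
        obtain ⟨_, h1, h2⟩ := (hmemLf e).1 he
        rw [hsymm_ne x g _ h1, hsymm_ne x g _ h2, hsymm_ne x₀ g _ h1, hsymm_ne x₀ g _ h2]
      have hsum1 : ∑ i : V → Fin n, F i * ‖A (i a) (i b)‖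
          = ∑ g : {j // j ≠ a} → Fin n, F (eqv.symm (x₀, g)) *
              ∑ x : Fin n, ‖A x (g ⟨b, hba⟩)‖ := by
        rw [← Equiv.sum_comp eqv.symm (fun i => F i * ‖A (i a) (i b)‖),
          Fintype.sum_prod_type, Finset.sum_comm]
        refine Finset.sum_congr rfl fun g _ => ?_
        rw [Finset.mul_sum]
        refine Finset.sum_congr rfl fun x _ => ?_
        rw [hFx x g, hsymm_a x g, hsymm_ne x g b hba]
      have hsum2 : ∑ i : V → Fin n, F i = (n:ℝ) * ∑ g : {j // j ≠ a} → Fin n,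
          F (eqv.symm (x₀, g)) := by
        rw [← Equiv.sum_comp eqv.symm F, Fintype.sum_prod_type]
        rw [Finset.sum_congr rfl fun x _ => Finset.sum_congr rfl fun g _ => hFx x g]
        rw [Finset.sum_const, Finset.card_univ, Fintype.card_fin, nsmul_eq_mul]
      have hsum3 : ∑ i : V → Fin n, F i * ‖A (i a) (i b)‖
          ≤ ((n:ℝ) * (C * K)) * ∑ g : {j // j ≠ a} → Fin n, F (eqv.symm (x₀, g)) := by
        rw [hsum1]
        calc ∑ g : {j // j ≠ a} → Fin n, F (eqv.symm (x₀, g)) *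
              ∑ x : Fin n, ‖A x (g ⟨b, hba⟩)‖
            ≤ ∑ g : {j // j ≠ a} → Fin n, F (eqv.symm (x₀, g)) * ((n:ℝ) * (C * K)) :=
              Finset.sum_le_sum fun g _ =>
                mul_le_mul_of_nonneg_left (hcol _) (hF0 _)
          _ = ((n:ℝ) * (C * K)) * ∑ g : {j // j ≠ a} → Fin n, F (eqv.symm (x₀, g)) := by
              rw [← Finset.sum_mul, mul_comm]
      -- length bookkeeping
      have hlen : L.length = Lf.length + (t' + 1) := by
        have h6 := hperm.length_eq
        rw [List.length_append, hsplit, List.length_append, List.length_cons] at h6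
        omega
      -- final assembly
      have hKpow : K * ((n:ℝ)*η) ^ (-(((N:ℝ) - 1) / 2))
          = ((n:ℝ)*η) ^ (-((((((N+1:ℕ)):ℝ)) - 1) / 2)) := by
        rw [hKdef, ← Real.rpow_add hD]
        congr 1
        push_cast
        ring
      calc ∑ i : V → Fin n, (L.map fun e => ‖A (i e.1) (i e.2)‖).prod
          ≤ ∑ i : V → Fin n, F i * (C ^ t' * ‖A (i a) (i b)‖) := by
            refine Finset.sum_le_sum fun i _ => ?_
            rw [key1 i]
            exact mul_le_mul_of_nonneg_left (key2 i) (hF0 i)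
        _ = C ^ t' * ∑ i : V → Fin n, F i * ‖A (i a) (i b)‖ := by
            rw [Finset.mul_sum]
            exact Finset.sum_congr rfl fun i _ => by ring
        _ ≤ C ^ t' * (((n:ℝ) * (C * K)) *
              ∑ g : {j // j ≠ a} → Fin n, F (eqv.symm (x₀, g))) :=
            mul_le_mul_of_nonneg_left hsum3 (by positivity)
        _ = C ^ t' * (C * K) * ((n:ℝ) *
              ∑ g : {j // j ≠ a} → Fin n, F (eqv.symm (x₀, g))) := by ring
        _ = C ^ t' * (C * K) * ∑ i : V → Fin n, F i := by rw [← hsum2]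
        _ ≤ C ^ t' * (C * K) *
              ((n : ℝ) ^ Fintype.card V * C ^ (Lf.length + N - 1) *
                ((n : ℝ) * η) ^ (-(((N : ℝ) - 1) / 2))) :=
            mul_le_mul_of_nonneg_left hIH (by positivity)
        _ = (n : ℝ) ^ Fintype.card V * (C ^ t' * C * C ^ (Lf.length + N - 1)) *
              (K * ((n:ℝ)*η) ^ (-(((N:ℝ) - 1) / 2))) := by ring_nf
        _ = (n : ℝ) ^ Fintype.card V * C ^ (L.length + (N+1) - 1 - 1) *
              ((n:ℝ)*η) ^ (-((((((N+1:ℕ)):ℝ)) - 1) / 2)) := by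
            rw [hKpow]
            congr 2
            rw [← pow_succ, ← pow_add]
            congr 1
            omega
        _ ≤ (n : ℝ) ^ Fintype.card V * C ^ (L.length + (N+1) - 1) *
              ((n:ℝ)*η) ^ (-((((((N+1:ℕ)):ℝ)) - 1) / 2)) := by
            have hcc : C ^ (L.length + (N+1) - 1 - 1) ≤ C ^ (L.length + (N+1) - 1) :=
              pow_le_pow_right₀ hC (by omega)
            have h8 : (0:ℝ) < ((n:ℝ)*η) ^ (-((((((N+1:ℕ)):ℝ)) - 1) / 2)) :=
              Real.rpow_pos_of_pos hD _
            have h9 : (0:ℝ) ≤ (n : ℝ) ^ Fintype.card V := by positivity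
            nlinarith [mul_le_mul_of_nonneg_left hcc h9]

/-- Graph bound for resolvent sums: if `𝒢` is a connected graph on `m` vertices given by an
edge list of `E` edges (multi-edges and loops allowed), and `A` is an `n×n` complex matrix
with symmetric absolute values, entries bounded by `C ≥ 1`, and Ward-type bound
`(1/n) ∑_b |A_{ab}|² ≤ C/(nη)`, then
`(1/n^m) ∑_{i₁,…,i_m} ∏_{(a,b)∈𝒢} |A_{i_a i_b}| ≤ C^{E+m-1} (nη)^{-(m-1)/2}`. -/
theorem graph_resolvent_bound (m n E : ℕ) (edges : Fin E → Fin m × Fin m)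
    (hconn : (SimpleGraph.fromRel
      (fun a b => ∃ k : Fin E, edges k = (a, b))).Connected)
    (η C : ℝ) (hη : 0 < η) (hC : 1 ≤ C) (hn : 0 < n)
    (A : Matrix (Fin n) (Fin n) ℂ)
    (hsym : ∀ a b, ‖A a b‖ = ‖A b a‖)
    (hbd : ∀ a b, ‖A a b‖ ≤ C)
    (hward : ∀ a : Fin n, (1 / (n : ℝ)) * ∑ b, ‖A a b‖ ^ 2 ≤ C / (n * η)) :
    (1 / (n : ℝ) ^ m) * ∑ i : Fin m → Fin n, ∏ k : Fin E,
        ‖A (i (edges k).1) (i (edges k).2)‖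
      ≤ C ^ (E + m - 1) * ((n : ℝ) * η) ^ (-(((m : ℝ) - 1) / 2)) := by
  have hm : 0 < m := by
    obtain ⟨x⟩ := hconn.nonempty
    exact x.pos
  set L := List.ofFn edges with hLdef
  have hGeq : (SimpleGraph.fromRel fun a b => ∃ k : Fin E, edges k = (a, b)) =
      SimpleGraph.fromRel fun x y => (x, y) ∈ L := by
    ext x y
    simp [SimpleGraph.fromRel_adj, hLdef, List.mem_ofFn, Set.mem_range]
  have hkey := key_bound n hn η C hη hC A hsym hbd hward (Fin m) m Finset.univ ⟨0, hm⟩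
    (by simp) (Finset.mem_univ _) L (fun e _ => ⟨Finset.mem_univ _, Finset.mem_univ _⟩)
    (fun v _ => (hGeq ▸ hconn).preconnected v _)
  have hprod : ∀ i : Fin m → Fin n,
      (L.map fun e => ‖A (i e.1) (i e.2)‖).prod
      = ∏ k : Fin E, ‖A (i (edges k).1) (i (edges k).2)‖ := by
    intro i
    rw [hLdef, List.map_ofFn, List.prod_ofFn]
    rfl
  rw [Finset.sum_congr rfl fun i _ => hprod i] at hkey
  rw [List.length_ofFn, Fintype.card_fin] at hkey
  have hnm : (0:ℝ) < (n:ℝ)^m := by positivity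
  calc (1 / (n : ℝ) ^ m) * ∑ i : Fin m → Fin n, ∏ k : Fin E,
        ‖A (i (edges k).1) (i (edges k).2)‖
      ≤ (1 / (n : ℝ) ^ m) * ((n : ℝ) ^ m * C ^ (E + m - 1) *
          ((n : ℝ) * η) ^ (-(((m : ℝ) - 1) / 2))) := by
        exact mul_le_mul_of_nonneg_left hkey (by positivity)
    _ = C ^ (E + m - 1) * ((n : ℝ) * η) ^ (-(((m : ℝ) - 1) / 2)) := by
        field_simp
end

section
/- Graph bound with a marked vertex: Let 𝒢 be a connected graph with m 'black' vertices and one additional 'white' vertex carrying a fixed index j, with E edges in total. Let G be n×n with |G_{ab}| ≤ C and (1/n)∑_b|G_{ab}|² ≤ C/(nη). Then (1/n^m) ∑_{i_1,…,i_m} ∏_{(a,b)∈𝒢} |G_{i_a i_b}| ≤ C^{E+m} (nη)^{-m/2}, where indices at the white vertex are fixed to j and black vertex indices are summed. -/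
/-- Summing over a function together with a fresh value for one coordinate overcounts
each function exactly `n` times. -/
private lemma sum_update_eq {m n : ℕ} (v : Fin m) (F : (Fin m → Fin n) → ℝ) :
    ∑ p : (Fin m → Fin n) × Fin n, F (Function.update p.1 v p.2)
      = (n : ℝ) * ∑ i : Fin m → Fin n, F i := by
  classical
  let e : ((Fin m → Fin n) × Fin n) ≃ ((Fin m → Fin n) × Fin n) :=
  { toFun := fun p => (Function.update p.1 v p.2, p.1 v)
    invFun := fun q => (Function.update q.1 v q.2, q.1 v)
    left_inv := by
      rintro ⟨i, x⟩
      simp [Function.update_idem, Function.update_eq_self]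
    right_inv := by
      rintro ⟨i, x⟩
      simp [Function.update_idem, Function.update_eq_self] }
  have h1 : ∑ p : (Fin m → Fin n) × Fin n, F (Function.update p.1 v p.2)
      = ∑ q : (Fin m → Fin n) × Fin n, F q.1 :=
    Equiv.sum_comp e (fun q : (Fin m → Fin n) × Fin n => F q.1)
  rw [h1, Fintype.sum_prod_type]
  simp [Finset.mul_sum]

/-- The iterated spanning-tree summation bound: summing the product of kernel factors
`a (i v) (parent value)` over all assignments, where each vertex's parent is strictly
closer to the root, gains a factor `B` per summed vertex. -/
private lemma tree_sum_bound {m n : ℕ} {B : ℝ} (hB : 0 ≤ B) (hn : 0 < n)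
    (a : Fin n → Fin n → ℝ) (ha : ∀ x y, 0 ≤ a x y)
    (hrow : ∀ y, ∑ x, a x y ≤ (n : ℝ) * B)
    (p : Fin m → Fin m ⊕ Unit) (D : Fin m ⊕ Unit → ℕ)
    (hpd : ∀ v, D (p v) < D (Sum.inl v)) (j : Fin n) (S : Finset (Fin m)) :
    ∑ i : Fin m → Fin n, ∏ v ∈ S, a (i v) (Sum.elim i (fun _ => j) (p v))
      ≤ (n : ℝ) ^ m * B ^ S.card := by
  classical
  induction S using Finset.strongInduction with
  | _ S ih =>
    rcases S.eq_empty_or_nonempty with rfl | hne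
    · simp only [Finset.prod_empty, Finset.sum_const, Finset.card_univ, Fintype.card_fun,
        Fintype.card_fin, nsmul_eq_mul, mul_one, Finset.card_empty, pow_zero]
      push_cast
      exact le_refl _
    · obtain ⟨v, hvS, hvmax⟩ := S.exists_max_image (fun u => D (Sum.inl u)) hne
      have hpvS : ∀ u ∈ S, p u ≠ Sum.inl v := by
        intro u hu h
        have h1 := hpd u
        rw [h] at h1
        have h2 := hvmax u hu
        omega
      have hpvv : p v ≠ Sum.inl v := by
        intro h
        have := hpd v
        rw [h] at this
        omega
      have hElim : ∀ (i : Fin m → Fin n) (x : Fin n) (u : Fin m ⊕ Unit), u ≠ Sum.inl v →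
          Sum.elim (Function.update i v x) (fun _ => j) u = Sum.elim i (fun _ => j) u := by
        intro i x u hu
        cases u with
        | inl w =>
          have hwv : w ≠ v := fun h => hu (by rw [h])
          simp [Function.update_of_ne hwv]
        | inr _ => rfl
      have hstep : ∀ (i : Fin m → Fin n) (x : Fin n),
          ∏ w ∈ S, a ((Function.update i v x) w)
              (Sum.elim (Function.update i v x) (fun _ => j) (p w))
            = a x (Sum.elim i (fun _ => j) (p v))
              * ∏ w ∈ S.erase v, a (i w) (Sum.elim i (fun _ => j) (p w)) := by
        intro i x
        rw [← Finset.mul_prod_erase S _ hvS]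
        congr 1
        · rw [Function.update_self, hElim i x (p v) hpvv]
        · refine Finset.prod_congr rfl fun w hw => ?_
          obtain ⟨hwv, hwS⟩ := Finset.mem_erase.mp hw
          rw [Function.update_of_ne hwv, hElim i x (p w) (hpvS w hwS)]
      have hup := sum_update_eq v
        (fun i : Fin m → Fin n => ∏ w ∈ S, a (i w) (Sum.elim i (fun _ => j) (p w)))
      have hn' : (0 : ℝ) < n := by exact_mod_cast hn
      have hs : (n : ℝ) * ∑ i : Fin m → Fin n, ∏ w ∈ S, a (i w) (Sum.elim i (fun _ => j) (p w))
          ≤ (n : ℝ) * ((n : ℝ) ^ m * B ^ (S.erase v).card * B) := by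
        rw [← hup]
        calc ∑ q : (Fin m → Fin n) × Fin n,
              ∏ w ∈ S, a ((Function.update q.1 v q.2) w)
                (Sum.elim (Function.update q.1 v q.2) (fun _ => j) (p w))
            = ∑ i : Fin m → Fin n, ∑ x : Fin n,
                (∏ w ∈ S.erase v, a (i w) (Sum.elim i (fun _ => j) (p w)))
                  * a x (Sum.elim i (fun _ => j) (p v)) := by
              rw [Fintype.sum_prod_type]
              exact Finset.sum_congr rfl fun i _ => Finset.sum_congr rfl fun x _ => by
                rw [hstep i x]; ring
          _ = ∑ i : Fin m → Fin n,
                (∏ w ∈ S.erase v, a (i w) (Sum.elim i (fun _ => j) (p w)))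
                  * ∑ x, a x (Sum.elim i (fun _ => j) (p v)) := by
              exact Finset.sum_congr rfl fun i _ => (Finset.mul_sum _ _ _).symm
          _ ≤ ∑ i : Fin m → Fin n,
                (∏ w ∈ S.erase v, a (i w) (Sum.elim i (fun _ => j) (p w))) * ((n : ℝ) * B) := by
              refine Finset.sum_le_sum fun i _ => ?_
              exact mul_le_mul_of_nonneg_left (hrow _)
                (Finset.prod_nonneg fun w _ => ha _ _)
          _ = ((n : ℝ) * B)
                * ∑ i : Fin m → Fin n, ∏ w ∈ S.erase v, a (i w) (Sum.elim i (fun _ => j) (p w)) := by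
              rw [Finset.mul_sum]
              exact Finset.sum_congr rfl fun i _ => by ring
          _ ≤ ((n : ℝ) * B) * ((n : ℝ) ^ m * B ^ (S.erase v).card) := by
              refine mul_le_mul_of_nonneg_left (ih (S.erase v) (Finset.erase_ssubset hvS)) ?_
              positivity
          _ = (n : ℝ) * ((n : ℝ) ^ m * B ^ (S.erase v).card * B) := by ring
      have hfin := le_of_mul_le_mul_left hs hn'
      have hcard : S.card = (S.erase v).card + 1 := by
        rw [Finset.card_erase_of_mem hvS]
        have := Finset.card_pos.mpr hne
        omega
      calc ∑ i : Fin m → Fin n, ∏ w ∈ S, a (i w) (Sum.elim i (fun _ => j) (p w))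
          ≤ (n : ℝ) ^ m * B ^ (S.erase v).card * B := hfin
        _ = (n : ℝ) ^ m * B ^ S.card := by rw [hcard, pow_succ]; ring

/-- Graph bound with a marked (white) vertex: if `𝒢` is a connected graph on `m` black
vertices together with one white vertex carrying a fixed index `j`, given by an edge list
of `E` edges, and `A` is an `n×n` complex matrix with symmetric absolute values, entries
bounded by `C ≥ 1`, and Ward-type bound `(1/n) ∑_b |A_{ab}|² ≤ C/(nη)`, then
`(1/n^m) ∑_{i₁,…,i_m} ∏_{(a,b)∈𝒢} |A_{i_a i_b}| ≤ C^{E+m} (nη)^{-m/2}`, where the black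
vertex indices are summed and the white vertex index is fixed to `j`. -/
theorem graph_resolvent_bound_marked (m n E : ℕ) (j : Fin n)
    (edges : Fin E → (Fin m ⊕ Unit) × (Fin m ⊕ Unit))
    (hconn : (SimpleGraph.fromRel
      (fun a b => ∃ k : Fin E, edges k = (a, b))).Connected)
    (η C : ℝ) (hη : 0 < η) (hC : 1 ≤ C) (hn : 0 < n)
    (A : Matrix (Fin n) (Fin n) ℂ)
    (hsym : ∀ a b, ‖A a b‖ = ‖A b a‖)
    (hbd : ∀ a b, ‖A a b‖ ≤ C)
    (hward : ∀ a : Fin n, (1 / (n : ℝ)) * ∑ b, ‖A a b‖ ^ 2 ≤ C / (n * η)) :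
    (1 / (n : ℝ) ^ m) * ∑ i : Fin m → Fin n, ∏ k : Fin E,
        ‖A (Sum.elim i (fun _ => j) (edges k).1)
          (Sum.elim i (fun _ => j) (edges k).2)‖
      ≤ C ^ (E + m) * ((n : ℝ) * η) ^ (-((m : ℝ) / 2)) := by
  classical
  set G := SimpleGraph.fromRel (fun a b => ∃ k : Fin E, edges k = (a, b)) with hG
  set wv : Fin m ⊕ Unit := Sum.inr () with hwv
  -- basic positivity facts
  have hn' : (0 : ℝ) < n := by exact_mod_cast hn
  have hC0 : (0 : ℝ) < C := lt_of_lt_of_le one_pos hC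
  have ht : (0 : ℝ) < (n : ℝ) * η := mul_pos hn' hη
  set B : ℝ := Real.sqrt (C / ((n : ℝ) * η)) with hB
  have hB0 : 0 ≤ B := Real.sqrt_nonneg _
  -- choose for each black vertex a parent strictly closer to the white vertex
  have key : ∀ v : Fin m, ∃ (u : Fin m ⊕ Unit) (k : Fin E),
      (edges k = (Sum.inl v, u) ∨ edges k = (u, Sum.inl v)) ∧
        G.dist u wv < G.dist (Sum.inl v) wv := by
    intro v
    have hne : (Sum.inl v : Fin m ⊕ Unit) ≠ wv := by simp [hwv]
    obtain ⟨pw, hlen⟩ := hconn.exists_walk_length_eq_dist (Sum.inl v) wv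
    obtain ⟨u, hadj, q, hq⟩ := SimpleGraph.Walk.exists_eq_cons_of_ne hne pw
    have hd : G.dist u wv ≤ q.length := SimpleGraph.dist_le q
    have hlen' : q.length + 1 = G.dist (Sum.inl v) wv := by
      rw [← hlen, hq, SimpleGraph.Walk.length_cons]
    rw [hG, SimpleGraph.fromRel_adj] at hadj
    obtain ⟨_, hk | hk⟩ := hadj
    · obtain ⟨k, hk⟩ := hk; exact ⟨u, k, Or.inl hk, by omega⟩
    · obtain ⟨k, hk⟩ := hk; exact ⟨u, k, Or.inr hk, by omega⟩
  choose p σ hpk hpd using key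
  -- the chosen edges are pairwise distinct
  have hσinj : Function.Injective σ := by
    intro a b hab
    have ha := hpk a
    have hb := hpk b
    rw [hab] at ha
    rcases ha with h1 | h1 <;> rcases hb with h2 | h2 <;>
      rw [h1, Prod.mk.injEq] at h2
    · exact Sum.inl_injective h2.1
    · exfalso
      have hda := hpd a
      have hdb := hpd b
      rw [h2.2] at hda
      rw [← h2.1] at hdb
      omega
    · exfalso
      have hda := hpd a
      have hdb := hpd b
      rw [h2.1] at hda
      rw [← h2.2] at hdb
      omega
    · exact Sum.inl_injective h2.2
  have hEm : m ≤ E := by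
    have := Fintype.card_le_of_injective σ hσinj
    simpa using this
  -- the Ward-type row bound
  have hrow : ∀ y : Fin n, ∑ x, norm (A x y) ≤ (n : ℝ) * B := by
    intro y
    have h2 : ∑ x, norm (A x y) ^ 2 ≤ (n : ℝ) * (C / ((n : ℝ) * η)) := by
      have hw := hward y
      have h3 : ∑ b, norm (A y b) ^ 2 ≤ (n : ℝ) * (C / ((n : ℝ) * η)) := by
        rw [one_div, inv_mul_le_iff₀ hn'] at hw
        linarith
      calc ∑ x, norm (A x y) ^ 2 = ∑ x, norm (A y x) ^ 2 := by
            exact Finset.sum_congr rfl fun x _ => by rw [hsym]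
        _ ≤ _ := h3
    have hcs : (∑ x, norm (A x y)) ^ 2 ≤ (n : ℝ) * ∑ x, norm (A x y) ^ 2 := by
      have := Finset.sum_mul_sq_le_sq_mul_sq Finset.univ
        (fun x : Fin n => norm (A x y)) (fun _ => (1 : ℝ))
      simpa [mul_comm] using this
    have hsq : (∑ x, norm (A x y)) ^ 2 ≤ ((n : ℝ) * B) ^ 2 := by
      have hB2 : B ^ 2 = C / ((n : ℝ) * η) := Real.sq_sqrt (by positivity)
      calc (∑ x, norm (A x y)) ^ 2 ≤ (n : ℝ) * ∑ x, norm (A x y) ^ 2 := hcs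
        _ ≤ (n : ℝ) * ((n : ℝ) * (C / ((n : ℝ) * η))) :=
            mul_le_mul_of_nonneg_left h2 hn'.le
        _ = ((n : ℝ) * B) ^ 2 := by rw [mul_pow, hB2]; ring
    have h0 : 0 ≤ ∑ x, norm (A x y) :=
      Finset.sum_nonneg fun x _ => norm_nonneg _
    have hnB : 0 ≤ (n : ℝ) * B := by positivity
    nlinarith
  -- apply the spanning-tree bound
  have main := tree_sum_bound hB0 hn (fun x y => norm (A x y))
    (fun x y => norm_nonneg _) hrow p (fun x => G.dist x wv) hpd j Finset.univ
  rw [Finset.card_univ, Fintype.card_fin] at main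
  -- bound the product over all edges by the product over chosen tree edges
  have hprod : ∀ i : Fin m → Fin n,
      (∏ k : Fin E, norm (A (Sum.elim i (fun _ => j) (edges k).1)
          (Sum.elim i (fun _ => j) (edges k).2)))
        ≤ C ^ (E - m) * ∏ v : Fin m, norm (A (i v) (Sum.elim i (fun _ => j) (p v))) := by
    intro i
    set T : Finset (Fin E) := Finset.univ.image σ with hT
    have hTcard : T.card = m := by
      rw [hT, Finset.card_image_of_injective _ hσinj, Finset.card_univ, Fintype.card_fin]
    have h1 : (∏ k : Fin E, norm (A (Sum.elim i (fun _ => j) (edges k).1)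
          (Sum.elim i (fun _ => j) (edges k).2)))
        = (∏ k ∈ T, norm (A (Sum.elim i (fun _ => j) (edges k).1)
            (Sum.elim i (fun _ => j) (edges k).2)))
          * ∏ k ∈ Tᶜ, norm (A (Sum.elim i (fun _ => j) (edges k).1)
            (Sum.elim i (fun _ => j) (edges k).2)) :=
      (Finset.prod_mul_prod_compl T _).symm
    have h2 : (∏ k ∈ Tᶜ, norm (A (Sum.elim i (fun _ => j) (edges k).1)
          (Sum.elim i (fun _ => j) (edges k).2))) ≤ C ^ (E - m) := by
      calc (∏ k ∈ Tᶜ, norm (A (Sum.elim i (fun _ => j) (edges k).1)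
            (Sum.elim i (fun _ => j) (edges k).2))) ≤ ∏ _k ∈ Tᶜ, C :=
            Finset.prod_le_prod (fun _ _ => norm_nonneg _) (fun k _ => hbd _ _)
        _ = C ^ Tᶜ.card := Finset.prod_const C
        _ = C ^ (E - m) := by rw [Finset.card_compl, Fintype.card_fin, hTcard]
    have h3 : (∏ k ∈ T, norm (A (Sum.elim i (fun _ => j) (edges k).1)
          (Sum.elim i (fun _ => j) (edges k).2)))
        = ∏ v : Fin m, norm (A (i v) (Sum.elim i (fun _ => j) (p v))) := by
      rw [hT, Finset.prod_image (fun a _ b _ h => hσinj h)]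
      refine Finset.prod_congr rfl fun v _ => ?_
      rcases hpk v with h | h
      · rw [h]; simp
      · rw [h]; simp only [Sum.elim_inl, Sum.elim_inr]
        exact hsym _ _
    rw [h1, h3]
    have hnng : 0 ≤ ∏ v : Fin m, norm (A (i v) (Sum.elim i (fun _ => j) (p v))) :=
      Finset.prod_nonneg fun _ _ => norm_nonneg _
    calc (∏ v : Fin m, norm (A (i v) (Sum.elim i (fun _ => j) (p v))))
          * ∏ k ∈ Tᶜ, norm (A (Sum.elim i (fun _ => j) (edges k).1)
            (Sum.elim i (fun _ => j) (edges k).2))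
        ≤ (∏ v : Fin m, norm (A (i v) (Sum.elim i (fun _ => j) (p v)))) * C ^ (E - m) :=
          mul_le_mul_of_nonneg_left h2 hnng
      _ = C ^ (E - m) * ∏ v : Fin m, norm (A (i v) (Sum.elim i (fun _ => j) (p v))) := by
          ring
  -- combine
  have hsum : (∑ i : Fin m → Fin n, ∏ k : Fin E,
        norm (A (Sum.elim i (fun _ => j) (edges k).1)
          (Sum.elim i (fun _ => j) (edges k).2)))
      ≤ C ^ (E - m) * ((n : ℝ) ^ m * B ^ m) := by
    calc (∑ i : Fin m → Fin n, ∏ k : Fin E,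
          norm (A (Sum.elim i (fun _ => j) (edges k).1)
            (Sum.elim i (fun _ => j) (edges k).2)))
        ≤ ∑ i : Fin m → Fin n,
            C ^ (E - m) * ∏ v : Fin m, norm (A (i v) (Sum.elim i (fun _ => j) (p v))) :=
          Finset.sum_le_sum fun i _ => hprod i
      _ = C ^ (E - m) * ∑ i : Fin m → Fin n,
            ∏ v : Fin m, norm (A (i v) (Sum.elim i (fun _ => j) (p v))) :=
          (Finset.mul_sum _ _ _).symm
      _ ≤ C ^ (E - m) * ((n : ℝ) ^ m * B ^ m) :=
          mul_le_mul_of_nonneg_left main (by positivity)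
  -- numeric endgame
  have hBm : B ^ m ≤ C ^ m * ((n : ℝ) * η) ^ (-((m : ℝ) / 2)) := by
    have h1 : B = (C / ((n : ℝ) * η)) ^ ((1 : ℝ) / 2) := Real.sqrt_eq_rpow _
    have h2 : B ^ m = (C / ((n : ℝ) * η)) ^ ((m : ℝ) / 2) := by
      rw [h1, ← Real.rpow_natCast ((C / ((n : ℝ) * η)) ^ ((1 : ℝ) / 2)) m,
        ← Real.rpow_mul (by positivity)]
      ring_nf
    have h3 : (C / ((n : ℝ) * η)) ^ ((m : ℝ) / 2)
        = C ^ ((m : ℝ) / 2) * ((n : ℝ) * η) ^ (-((m : ℝ) / 2)) := by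
      rw [Real.div_rpow hC0.le ht.le, Real.rpow_neg ht.le, div_eq_mul_inv]
    have h4 : C ^ ((m : ℝ) / 2) ≤ C ^ (m : ℕ) := by
      rw [← Real.rpow_natCast C m]
      exact Real.rpow_le_rpow_of_exponent_le hC (half_le_self (Nat.cast_nonneg m))
    rw [h2, h3]
    exact mul_le_mul_of_nonneg_right h4 (Real.rpow_nonneg ht.le _)
  have hnm : (0 : ℝ) < (n : ℝ) ^ m := by positivity
  calc (1 / (n : ℝ) ^ m) * ∑ i : Fin m → Fin n, ∏ k : Fin E,
        norm (A (Sum.elim i (fun _ => j) (edges k).1)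
          (Sum.elim i (fun _ => j) (edges k).2))
      ≤ (1 / (n : ℝ) ^ m) * (C ^ (E - m) * ((n : ℝ) ^ m * B ^ m)) :=
        mul_le_mul_of_nonneg_left hsum (by positivity)
    _ = C ^ (E - m) * B ^ m := by field_simp
    _ ≤ C ^ (E - m) * (C ^ m * ((n : ℝ) * η) ^ (-((m : ℝ) / 2))) :=
        mul_le_mul_of_nonneg_left hBm (by positivity)
    _ = C ^ E * ((n : ℝ) * η) ^ (-((m : ℝ) / 2)) := by
        rw [← mul_assoc, ← pow_add, Nat.sub_add_cancel hEm]
    _ ≤ C ^ (E + m) * ((n : ℝ) * η) ^ (-((m : ℝ) / 2)) := by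
        refine mul_le_mul_of_nonneg_right ?_ (Real.rpow_nonneg ht.le _)
        exact pow_le_pow_right₀ hC (Nat.le_add_right E m)
end
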